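/- arXiv:2107.09946 — 3 statements merged into one kernel-verified Lean document; each statement's English description precedes it below -/
import Mathlib

section
/- Let A : ℝ → ℝ satisfy A(0)=0, A(-s) - A(s) = s, and A(-s) + A(s) ≥ 0 for all s. Then for any real s and any reals vK, vσ, one has (A(-s)·vK - A(s)·vσ)(vK - vσ) ≥ (s/2)(vK² - vσ²). -/
/-- Coercivity inequality for the advective part: for any admissible flux function A,
    (A(-s)·vK - A(s)·vσ)(vK - vσ) ≥ (s/2)(vK² - vσ²). -/
theorem stmt_8 (A : ℝ → ℝ) (hA0 : A 0 = 0)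
    (hA1 : ∀ s : ℝ, A (-s) - A s = s) (hA2 : ∀ s : ℝ, 0 ≤ A (-s) + A s) :
    ∀ s vK vσ : ℝ,
      s / 2 * (vK ^ 2 - vσ ^ 2) ≤ (A (-s) * vK - A s * vσ) * (vK - vσ) := by
  intro s vK vσ
  nlinarith [hA1 s, hA2 s, sq_nonneg (vK - vσ), mul_nonneg (hA2 s) (sq_nonneg (vK - vσ))]
end

section
/- Let μ be a probability measure on a measurable space, ψ ∈ L²(μ) with ‖ψ‖_{L²(μ)} = 1, and let ⟨ψ⟩ = ∫ ψ dμ. Then for all real t: ∫ Φ₁((1 + tψ)²) dμ ≤ t² ∫ ψ² log(ψ²) dμ + (1 + t²) log(1 + t²) + (1 + |⟨ψ⟩|) t², where Φ₁(s) = s log s - s + 1 (extended by Φ₁(0) = 1). -/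
open MeasureTheory

/-- Φ₁(s) = s log s - s + 1 (Φ₁(0) = 1 since log 0 = 0 in Mathlib). -/
noncomputable def Phi1 (s : ℝ) : ℝ := s * Real.log s - s + 1

namespace Stmt15Aux

open Real Set Filter intervalIntegral

lemma hasDerivAt_self_mul_self_mul_log (x : ℝ) :
    HasDerivAt (fun y : ℝ => y * (y * Real.log y)) (2 * x * Real.log x + x) x := by
  rcases eq_or_ne x 0 with rfl | hx
  · rw [hasDerivAt_iff_tendsto_slope]
    have h0 : Tendsto (fun y : ℝ => y * Real.log y) (nhdsWithin (0:ℝ) {(0:ℝ)}ᶜ) (nhds 0) := by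
      have h := Real.continuous_mul_log.tendsto 0
      simp only [zero_mul] at h
      exact h.mono_left nhdsWithin_le_nhds
    have heq : (fun y : ℝ => y * Real.log y)
        =ᶠ[nhdsWithin (0:ℝ) {(0:ℝ)}ᶜ] slope (fun y : ℝ => y * (y * Real.log y)) 0 := by
      filter_upwards [self_mem_nhdsWithin] with y hy
      have hy' : (y : ℝ) ≠ 0 := hy
      rw [slope_def_field]
      field_simp
      ring
    simpa using h0.congr' heq
  · have h := (hasDerivAt_id x).mul (Real.hasDerivAt_mul_log hx)
    convert h using 1
    · rfl
    · rfl
    · rfl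
    simp only [id]
    ring

lemma hasDerivAt_sq_mul_log (x : ℝ) :
    HasDerivAt (fun y : ℝ => y ^ 2 * Real.log (y ^ 2)) (2 * x * Real.log (x ^ 2) + 2 * x) x := by
  have hfun : (fun y : ℝ => y ^ 2 * Real.log (y ^ 2))
      = fun y : ℝ => 2 * (y * (y * Real.log y)) := by
    funext y
    rw [Real.log_pow]
    push_cast
    ring
  rw [hfun]
  have h := (hasDerivAt_self_mul_self_mul_log x).const_mul 2
  convert h using 1
  · rfl
  · rfl
  rw [Real.log_pow]
  push_cast
  ring

lemma hasDerivAt_mul_log_sq {x : ℝ} (hx : x ≠ 0) :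
    HasDerivAt (fun y : ℝ => y * Real.log (y ^ 2)) (Real.log (x ^ 2) + 2) x := by
  have hfun : (fun y : ℝ => y * Real.log (y ^ 2)) = fun y : ℝ => 2 * (y * Real.log y) := by
    funext y
    rw [Real.log_pow]
    push_cast
    ring
  rw [hfun]
  have h := (Real.hasDerivAt_mul_log hx).const_mul 2
  convert h using 1
  · rfl
  · rfl
  rw [Real.log_pow]
  push_cast
  ring

lemma continuous_mul_log_sq : Continuous (fun y : ℝ => y * Real.log (y ^ 2)) := by
  have hfun : (fun y : ℝ => y * Real.log (y ^ 2)) = fun y : ℝ => 2 * (y * Real.log y) := by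
    funext y
    rw [Real.log_pow]
    push_cast
    ring
  rw [hfun]
  exact continuous_const.mul Real.continuous_mul_log

/-- FTC allowing one point where the derivative may fail. -/
lemma ftc_singular {P g : ℝ → ℝ} {c d s₀ : ℝ} (hcd : c ≤ d) (hPc : Continuous P)
    (hder : ∀ s, s ≠ s₀ → HasDerivAt P (g s) s)
    (hint : ∀ u v : ℝ, IntervalIntegrable g volume u v) :
    ∫ s in c..d, g s = P d - P c := by
  by_cases hs : s₀ ∈ Ioo c d
  · have h1 : ∫ s in c..s₀, g s = P s₀ - P c :=
      integral_eq_sub_of_hasDeriv_right_of_le hs.1.le hPc.continuousOn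
        (fun x hx => (hder x hx.2.ne).hasDerivWithinAt) (hint _ _)
    have h2 : ∫ s in s₀..d, g s = P d - P s₀ :=
      integral_eq_sub_of_hasDeriv_right_of_le hs.2.le hPc.continuousOn
        (fun x hx => (hder x hx.1.ne').hasDerivWithinAt) (hint _ _)
    rw [← integral_add_adjacent_intervals (hint c s₀) (hint s₀ d), h1, h2]
    ring
  · exact integral_eq_sub_of_hasDeriv_right_of_le hcd hPc.continuousOn
      (fun x hx => (hder x (fun h => hs (h ▸ hx))).hasDerivWithinAt) (hint _ _)

lemma intervalIntegrable_log' (a b : ℝ) : IntervalIntegrable Real.log volume a b := by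
  have key : ∀ c : ℝ, IntervalIntegrable Real.log volume 0 c := by
    have hpos : ∀ c : ℝ, 0 ≤ c → IntervalIntegrable Real.log volume 0 c := by
      intro c hc
      rw [intervalIntegrable_iff, uIoc_of_le hc]
      have hrpow : IntegrableOn (fun x : ℝ => x ^ (-(1/2) : ℝ)) (Ioc 0 c) volume := by
        have h := intervalIntegrable_rpow' (a := 0) (b := c) (r := -(1/2)) (by norm_num)
        rwa [intervalIntegrable_iff, uIoc_of_le hc] at h
      have hid : IntegrableOn (fun x : ℝ => x) (Ioc 0 c) volume :=
        continuous_id.integrableOn_Ioc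
      refine Integrable.mono' ((hrpow.const_mul 2).add hid)
        Real.measurable_log.aestronglyMeasurable ?_
      filter_upwards [ae_restrict_mem measurableSet_Ioc] with x hx
      have hx0 : 0 < x := hx.1
      rcases le_or_gt 1 x with h1 | h1
      · have h2 : Real.log x ≤ x - 1 := Real.log_le_sub_one_of_pos hx0
        have h3 : 0 ≤ Real.log x := Real.log_nonneg h1
        have h4 : (0:ℝ) ≤ 2 * x ^ (-(1/2) : ℝ) := by positivity
        rw [Real.norm_eq_abs, abs_of_nonneg h3]
        simp only [Pi.add_apply]
        linarith
      · have h3 : Real.log x ≤ 0 := Real.log_nonpos hx0.le h1.le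
        rw [Real.norm_eq_abs, abs_of_nonpos h3]
        have h5 : 0 < x ^ ((1/2) : ℝ) := Real.rpow_pos_of_pos hx0 _
        have h6 : Real.log (x ^ ((1/2):ℝ)) = (1/2) * Real.log x := Real.log_rpow hx0 _
        have h7 : Real.log ((x ^ ((1/2):ℝ))⁻¹) ≤ (x ^ ((1/2):ℝ))⁻¹ - 1 :=
          Real.log_le_sub_one_of_pos (by positivity)
        rw [Real.log_inv, h6] at h7
        have h8 : x ^ (-(1/2) : ℝ) = (x ^ ((1/2):ℝ))⁻¹ := by
          rw [← Real.rpow_neg hx0.le]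
        simp only [Pi.add_apply]
        rw [h8]
        linarith
    intro c
    rcases le_total 0 c with hc | hc
    · exact hpos c hc
    · rw [IntervalIntegrable.iff_comp_neg]
      have heq : (fun x : ℝ => Real.log (-x)) = Real.log := funext fun x => Real.log_neg_eq_log x
      rw [heq, neg_zero]
      exact hpos (-c) (by linarith)
  exact (key a).symm.trans (key b)

lemma intervalIntegrable_log_affine (a : ℝ) (u v : ℝ) :
    IntervalIntegrable (fun s : ℝ => Real.log (1 + s * a)) volume u v := by
  rcases eq_or_ne a 0 with rfl | ha
  · simp only [mul_zero, add_zero, Real.log_one]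
    exact intervalIntegrable_const
  · have h1 := intervalIntegrable_log' (u * a + 1) (v * a + 1)
    have h2 := h1.comp_add_right 1
    have h3 := h2.comp_mul_right (c := a)
    have heq : (fun x : ℝ => Real.log (x * a + 1)) = fun s : ℝ => Real.log (1 + s * a) :=
      funext fun x => by rw [add_comm]
    have hu : (u * a + 1 - 1) / a = u := by field_simp; ring
    have hv : (v * a + 1 - 1) / a = v := by field_simp; ring
    rw [heq, hu, hv] at h3
    exact h3

lemma intervalIntegrable_log_affine_sq (a : ℝ) (u v : ℝ) :
    IntervalIntegrable (fun s : ℝ => Real.log ((1 + s * a) ^ 2)) volume u v := by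
  have heq : (fun s : ℝ => Real.log ((1 + s * a) ^ 2))
      = fun s : ℝ => 2 * Real.log (1 + s * a) := by
    funext s
    rw [Real.log_pow]
    push_cast
    ring
  rw [heq]
  exact (intervalIntegrable_log_affine a u v).const_mul 2

end Stmt15Aux
section P2
namespace Stmt15Aux
open Real Set Filter intervalIntegral

variable {a t : ℝ}

/-- derivative of `F s = Phi1 ((1+s a)²) - s² a² log a²` (valid at every `s`). -/
lemma hasDerivAt_F (a : ℝ) (s : ℝ) :
    HasDerivAt (fun s : ℝ => Phi1 ((1 + s * a) ^ 2) - s ^ 2 * (a ^ 2 * Real.log (a ^ 2)))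
      (2 * a * (1 + s * a) * Real.log ((1 + s * a) ^ 2)
        - 2 * s * (a ^ 2 * Real.log (a ^ 2))) s := by
  have haff : HasDerivAt (fun s : ℝ => 1 + s * a) a s := by
    simpa using (hasDerivAt_mul_const (c := a) (x := s)).const_add 1
  have h1 : HasDerivAt (fun s : ℝ => (1 + s * a) ^ 2 * Real.log ((1 + s * a) ^ 2))
      ((2 * (1 + s * a) * Real.log ((1 + s * a) ^ 2) + 2 * (1 + s * a)) * a) s := by
    have := (hasDerivAt_sq_mul_log (1 + s * a)).comp s haff
    simpa [Function.comp_def] using this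
  have h2 : HasDerivAt (fun s : ℝ => (1 + s * a) ^ 2) (2 * (1 + s * a) * a) s := by
    have := (hasDerivAt_pow 2 (1 + s * a)).comp s haff
    simpa [Function.comp_def] using this
  have h3 : HasDerivAt (fun s : ℝ => s ^ 2 * (a ^ 2 * Real.log (a ^ 2)))
      (2 * s * (a ^ 2 * Real.log (a ^ 2))) s := by
    have := (hasDerivAt_pow 2 s).const_mul (a ^ 2 * Real.log (a ^ 2))
    simpa [mul_comm, mul_assoc] using this
  have hPhi : (fun s : ℝ => Phi1 ((1 + s * a) ^ 2) - s ^ 2 * (a ^ 2 * Real.log (a ^ 2)))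
      = fun s : ℝ => ((1 + s * a) ^ 2 * Real.log ((1 + s * a) ^ 2) - (1 + s * a) ^ 2 + 1)
          - s ^ 2 * (a ^ 2 * Real.log (a ^ 2)) := by
    funext s; simp [Phi1]
  rw [hPhi]
  have h4 := (((h1.sub h2).add_const 1).sub h3)
  convert h4 using 1
  · rfl
  · rfl
  · rfl
  ring

/-- derivative of `w` away from the singular point. -/
lemma hasDerivAt_w (a : ℝ) {s : ℝ} (hs : 1 + s * a ≠ 0) :
    HasDerivAt (fun s : ℝ => 2 * a * (1 + s * a) * Real.log ((1 + s * a) ^ 2)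
        - 2 * s * (a ^ 2 * Real.log (a ^ 2)))
      (4 * a ^ 2 + 2 * a ^ 2 * Real.log ((1 + s * a) ^ 2)
        - 2 * a ^ 2 * Real.log (a ^ 2)) s := by
  have haff : HasDerivAt (fun s : ℝ => 1 + s * a) a s := by
    simpa using (hasDerivAt_mul_const (c := a) (x := s)).const_add 1
  have h1 : HasDerivAt (fun s : ℝ => (1 + s * a) * Real.log ((1 + s * a) ^ 2))
      ((Real.log ((1 + s * a) ^ 2) + 2) * a) s := by
    have := (hasDerivAt_mul_log_sq hs).comp s haff
    simpa [Function.comp_def] using this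
  have h2 : HasDerivAt (fun s : ℝ => s * (2 * (a ^ 2 * Real.log (a ^ 2))))
      (2 * (a ^ 2 * Real.log (a ^ 2))) s := hasDerivAt_mul_const _
  have h3 := (h1.const_mul (2 * a)).sub h2
  convert h3 using 1
  · rfl
  · rfl
  · funext u; simp only [Pi.sub_apply]; ring
  · ring

lemma continuous_w (a t : ℝ) :
    Continuous (fun s : ℝ => (t - s) * (2 * a * (1 + s * a) * Real.log ((1 + s * a) ^ 2)
      - 2 * s * (a ^ 2 * Real.log (a ^ 2)))
      + (Phi1 ((1 + s * a) ^ 2) - s ^ 2 * (a ^ 2 * Real.log (a ^ 2)))) := by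
  have haff : Continuous (fun s : ℝ => 1 + s * a) := by continuity
  have h1 : Continuous (fun s : ℝ => (1 + s * a) * Real.log ((1 + s * a) ^ 2)) :=
    continuous_mul_log_sq.comp haff
  have h2 : Continuous (fun s : ℝ => (1 + s * a) ^ 2 * Real.log ((1 + s * a) ^ 2)) := by
    have : (fun s : ℝ => (1 + s * a) ^ 2 * Real.log ((1 + s * a) ^ 2))
        = fun s : ℝ => (1 + s * a) * ((1 + s * a) * Real.log ((1 + s * a) ^ 2)) := by
      funext s; ring
    rw [this]
    exact haff.mul h1
  have hPhi : Continuous (fun s : ℝ => Phi1 ((1 + s * a) ^ 2)) := by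
    have : (fun s : ℝ => Phi1 ((1 + s * a) ^ 2))
        = fun s : ℝ => (1 + s * a) ^ 2 * Real.log ((1 + s * a) ^ 2) - (1 + s * a) ^ 2 + 1 := by
      funext s; simp [Phi1]
    rw [this]
    exact (h2.sub (haff.pow 2)).add continuous_const
  have hw : Continuous (fun s : ℝ => 2 * a * (1 + s * a) * Real.log ((1 + s * a) ^ 2)
      - 2 * s * (a ^ 2 * Real.log (a ^ 2))) := by
    have heq : (fun s : ℝ => 2 * a * (1 + s * a) * Real.log ((1 + s * a) ^ 2)
        - 2 * s * (a ^ 2 * Real.log (a ^ 2)))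
        = fun s : ℝ => 2 * a * ((1 + s * a) * Real.log ((1 + s * a) ^ 2))
          - 2 * s * (a ^ 2 * Real.log (a ^ 2)) := by
      funext s; ring
    rw [heq]
    exact (continuous_const.mul h1).sub (by fun_prop)
  exact ((continuous_const.sub continuous_id).mul hw).add (hPhi.sub (by fun_prop))

lemma intervalIntegrable_f (a t : ℝ) (u v : ℝ) :
    IntervalIntegrable (fun s : ℝ => (t - s) * (4 * a ^ 2
      + 2 * a ^ 2 * Real.log ((1 + s * a) ^ 2) - 2 * a ^ 2 * Real.log (a ^ 2))) volume u v := by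
  apply IntervalIntegrable.continuousOn_mul
  · apply IntervalIntegrable.sub
    · apply IntervalIntegrable.add intervalIntegrable_const
      exact (intervalIntegrable_log_affine_sq a u v).const_mul _
    · exact intervalIntegrable_const
  · fun_prop

/-- The key pointwise identity. -/
lemma key_identity (a : ℝ) {t : ℝ} (ht : 0 ≤ t) :
    Phi1 ((1 + t * a) ^ 2) = t ^ 2 * (a ^ 2 * Real.log (a ^ 2))
      + ∫ s in (0:ℝ)..t, (t - s) * (4 * a ^ 2
          + 2 * a ^ 2 * Real.log ((1 + s * a) ^ 2) - 2 * a ^ 2 * Real.log (a ^ 2)) := by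
  rcases eq_or_ne a 0 with rfl | ha
  · simp [Phi1]
  · have hFTC : ∫ s in (0:ℝ)..t, (t - s) * (4 * a ^ 2
        + 2 * a ^ 2 * Real.log ((1 + s * a) ^ 2) - 2 * a ^ 2 * Real.log (a ^ 2))
        = ((t - t) * (2 * a * (1 + t * a) * Real.log ((1 + t * a) ^ 2)
              - 2 * t * (a ^ 2 * Real.log (a ^ 2)))
            + (Phi1 ((1 + t * a) ^ 2) - t ^ 2 * (a ^ 2 * Real.log (a ^ 2))))
          - ((t - 0) * (2 * a * (1 + 0 * a) * Real.log ((1 + 0 * a) ^ 2)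
              - 2 * 0 * (a ^ 2 * Real.log (a ^ 2)))
            + (Phi1 ((1 + 0 * a) ^ 2) - 0 ^ 2 * (a ^ 2 * Real.log (a ^ 2)))) := by
      apply ftc_singular (s₀ := -a⁻¹) ht (continuous_w a t)
      · intro s hs
        have hsa : 1 + s * a ≠ 0 := by
          intro h
          apply hs
          field_simp at h ⊢
          linarith
        have h1 : HasDerivAt (fun u : ℝ => t - u) (-1) s := by
          simpa using (hasDerivAt_id s).const_sub t
        have h2 := (h1.mul (hasDerivAt_w a hsa)).add (hasDerivAt_F a s)
        convert h2 using 1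
        · rfl
        · rfl
        · rfl
        ring
      · exact fun u v => intervalIntegrable_f a t u v
    rw [hFTC]
    have hPhi1 : Phi1 ((1 + 0 * a) ^ 2) = 0 := by norm_num [Phi1]
    rw [hPhi1]
    norm_num

end Stmt15Aux
end P2
section P3
namespace Stmt15Aux
open Real Set Filter intervalIntegral

lemma log_sq_eq_two_mul (y : ℝ) : Real.log (y ^ 2) = 2 * Real.log |y| := by
  rw [Real.log_pow, Real.log_abs]
  push_cast
  ring

lemma abs_mul_log_sq_le {y M : ℝ} (hy : |y| ≤ M) (hM : 1 ≤ M) :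
    |y * Real.log (y ^ 2)| ≤ 2 + 2 * M * Real.log M := by
  have hM0 : (0:ℝ) < M := lt_of_lt_of_le one_pos hM
  have hlogM : 0 ≤ Real.log M := Real.log_nonneg hM
  rcases eq_or_ne y 0 with rfl | hy0
  · simp
    positivity
  have hay : 0 < |y| := abs_pos.mpr hy0
  have hl : Real.log (y ^ 2) = 2 * Real.log |y| := log_sq_eq_two_mul y
  set z := |y| with hz
  rcases le_or_gt z 1 with h1 | h1
  · have h2 := Real.abs_log_mul_self_lt z hay h1
    rw [abs_mul, abs_of_pos hay] at h2
    have h3 : |y * Real.log (y ^ 2)| = 2 * (|Real.log z| * z) := by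
      rw [hl, abs_mul, abs_mul, abs_two, ← hz]
      ring
    rw [h3]
    nlinarith [mul_nonneg hM0.le hlogM]
  · have hly : 0 ≤ Real.log z := Real.log_nonneg h1.le
    have hlM : Real.log z ≤ Real.log M := Real.log_le_log hay hy
    have h3 : |y * Real.log (y ^ 2)| = z * (2 * Real.log z) := by
      rw [hl, abs_mul, ← hz]
      congr 1
      rw [abs_of_nonneg (by positivity)]
    rw [h3]
    have h4 : z * (2 * Real.log z) ≤ M * (2 * Real.log M) :=
      mul_le_mul hy (by linarith) (by linarith) (by linarith)
    linarith

lemma abs_log_sq_le {y M : ℝ} (hy : |y| ≤ M) (hM : 1 ≤ M) :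
    |Real.log (y ^ 2)| ≤ 4 * Real.log M - Real.log (y ^ 2) := by
  have hM0 : (0:ℝ) < M := lt_of_lt_of_le one_pos hM
  have hlogM : 0 ≤ Real.log M := Real.log_nonneg hM
  have hu : Real.log (y ^ 2) ≤ 2 * Real.log M := by
    rcases eq_or_ne y 0 with rfl | hy0
    · simp
      positivity
    · rw [log_sq_eq_two_mul]
      have := Real.log_le_log (abs_pos.mpr hy0) hy
      linarith
  rcases abs_cases (Real.log (y ^ 2)) with ⟨h, _⟩ | ⟨h, _⟩ <;> linarith

/-- Bound for the inner norm integral, used for product integrability. -/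
lemma norm_bound {t : ℝ} (ht : 0 ≤ t) (a : ℝ) :
    (∫ s in Ioc (0:ℝ) t, ‖(t - s) * (4 * a ^ 2 + 2 * a ^ 2 * Real.log ((1 + s * a) ^ 2)
        - 2 * a ^ 2 * Real.log (a ^ 2))‖)
      ≤ t * (4 * a ^ 2 * t + (8 * t * (a ^ 2 * Real.log (1 + t * |a|))
          + 4 * |a| * (2 + 2 * (1 + t * |a|) * Real.log (1 + t * |a|) + 2 * (1 + t * |a|)))
          + 2 * a ^ 2 * |Real.log (a ^ 2)| * t) := by
  rcases (eq_or_lt_of_le ht) with rfl | ht0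
  · simp
  have hMnn : 0 ≤ t * |a| := mul_nonneg ht (abs_nonneg a)
  have hM1 : (1:ℝ) ≤ 1 + t * |a| := by linarith
  have hM0 : (0:ℝ) < 1 + t * |a| := by linarith
  have hlogM : 0 ≤ Real.log (1 + t * |a|) := Real.log_nonneg hM1
  rcases eq_or_ne a 0 with rfl | ha
  · simp
  have habs0 : |a| ≠ 0 := abs_ne_zero.mpr ha
  have habspos : 0 < |a| := abs_pos.mpr ha
  set M := 1 + t * |a| with hMdef
  -- integrability facts
  have hfint : IntegrableOn (fun s : ℝ => Real.log ((1 + s * a) ^ 2)) (Ioc 0 t) volume := by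
    have := intervalIntegrable_log_affine_sq a 0 t
    rwa [intervalIntegrable_iff, uIoc_of_le ht] at this
  have hyle : ∀ s, 0 ≤ s → s ≤ t → |1 + s * a| ≤ M := by
    intro s hs0 hst
    have h1 : |1 + s * a| ≤ |(1:ℝ)| + |s * a| := abs_add_le _ _
    have h2 : |s * a| ≤ t * |a| := by
      rw [abs_mul]
      apply mul_le_mul_of_nonneg_right _ (abs_nonneg a)
      rwa [abs_of_nonneg hs0]
    simp only [abs_one] at h1
    simp only [hMdef]
    linarith
  have hconst : ∀ C : ℝ, (∫ _ in Ioc (0:ℝ) t, C) = t * C := by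
    intro C
    rw [setIntegral_const, Real.volume_real_Ioc_of_le ht, smul_eq_mul, sub_zero]
  -- Step 1 : bound the integrand pointwise
  have step1 : (∫ s in Ioc (0:ℝ) t, ‖(t - s) * (4 * a ^ 2 + 2 * a ^ 2 * Real.log ((1 + s * a) ^ 2)
        - 2 * a ^ 2 * Real.log (a ^ 2))‖)
      ≤ ∫ s in Ioc (0:ℝ) t, (t * (4 * a ^ 2) + (t * (2 * a ^ 2)) * |Real.log ((1 + s * a) ^ 2)|
          + t * (2 * a ^ 2 * |Real.log (a ^ 2)|)) := by
    apply setIntegral_mono_on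
    · have h := intervalIntegrable_f a t 0 t
      rw [intervalIntegrable_iff, uIoc_of_le ht] at h
      exact h.norm
    · exact ((integrable_const _).add ((hfint.abs).const_mul _)).add (integrable_const _)
    · exact measurableSet_Ioc
    · intro s hs
      have h1 : |t - s| ≤ t := by
        rw [abs_of_nonneg (by linarith [hs.2] : (0:ℝ) ≤ t - s)]
        linarith [hs.1]
      have e0 : (0:ℝ) ≤ 2 * a ^ 2 := by positivity
      have e1 : 2 * a ^ 2 * Real.log ((1 + s * a) ^ 2)
          ≤ 2 * a ^ 2 * |Real.log ((1 + s * a) ^ 2)| :=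
        mul_le_mul_of_nonneg_left (le_abs_self _) e0
      have e2 : 2 * a ^ 2 * (-|Real.log ((1 + s * a) ^ 2)|)
          ≤ 2 * a ^ 2 * Real.log ((1 + s * a) ^ 2) :=
        mul_le_mul_of_nonneg_left (neg_abs_le _) e0
      have e3 : 2 * a ^ 2 * Real.log (a ^ 2) ≤ 2 * a ^ 2 * |Real.log (a ^ 2)| :=
        mul_le_mul_of_nonneg_left (le_abs_self _) e0
      have e4 : 2 * a ^ 2 * (-|Real.log (a ^ 2)|) ≤ 2 * a ^ 2 * Real.log (a ^ 2) :=
        mul_le_mul_of_nonneg_left (neg_abs_le _) e0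
      have h2 : |4 * a ^ 2 + 2 * a ^ 2 * Real.log ((1 + s * a) ^ 2)
          - 2 * a ^ 2 * Real.log (a ^ 2)|
          ≤ 4 * a ^ 2 + 2 * a ^ 2 * |Real.log ((1 + s * a) ^ 2)|
            + 2 * a ^ 2 * |Real.log (a ^ 2)| := by
        rw [abs_le]
        constructor <;> nlinarith [sq_nonneg a]
      rw [norm_mul, Real.norm_eq_abs, Real.norm_eq_abs]
      calc |t - s| * |4 * a ^ 2 + 2 * a ^ 2 * Real.log ((1 + s * a) ^ 2)
          - 2 * a ^ 2 * Real.log (a ^ 2)|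
          ≤ t * (4 * a ^ 2 + 2 * a ^ 2 * |Real.log ((1 + s * a) ^ 2)|
            + 2 * a ^ 2 * |Real.log (a ^ 2)|) :=
            mul_le_mul h1 h2 (abs_nonneg _) ht
        _ = t * (4 * a ^ 2) + (t * (2 * a ^ 2)) * |Real.log ((1 + s * a) ^ 2)|
            + t * (2 * a ^ 2 * |Real.log (a ^ 2)|) := by ring
  have step2 : (∫ s in Ioc (0:ℝ) t, (t * (4 * a ^ 2)
        + (t * (2 * a ^ 2)) * |Real.log ((1 + s * a) ^ 2)|
        + t * (2 * a ^ 2 * |Real.log (a ^ 2)|)))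
      = t * (t * (4 * a ^ 2)) + (t * (2 * a ^ 2))
          * (∫ s in Ioc (0:ℝ) t, |Real.log ((1 + s * a) ^ 2)|)
        + t * (t * (2 * a ^ 2 * |Real.log (a ^ 2)|)) := by
    have e1 : Integrable (fun s : ℝ => t * (2 * a ^ 2) * |Real.log ((1 + s * a) ^ 2)|)
        (volume.restrict (Ioc 0 t)) := (hfint.abs).const_mul _
    have hfg : Integrable (fun s : ℝ => t * (4 * a ^ 2)
        + t * (2 * a ^ 2) * |Real.log ((1 + s * a) ^ 2)|) (volume.restrict (Ioc 0 t)) :=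
      (integrable_const _).add e1
    rw [integral_add hfg (integrable_const _), integral_add (integrable_const _) e1,
      hconst, hconst, MeasureTheory.integral_const_mul]
  -- FTC evaluation of ∫ log((1+sa)^2)
  have haffc : Continuous (fun s : ℝ => 1 + s * a) := by continuity
  have hval : (∫ s in Ioc (0:ℝ) t, Real.log ((1 + s * a) ^ 2))
      = ((1 + t * a) / a) * (Real.log ((1 + t * a) ^ 2) - 2)
        - ((1 + 0 * a) / a) * (Real.log ((1 + 0 * a) ^ 2) - 2) := by
    rw [← intervalIntegral.integral_of_le ht]
    apply ftc_singular (s₀ := -a⁻¹) ht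
    · have hre : (fun s : ℝ => ((1 + s * a) / a) * (Real.log ((1 + s * a) ^ 2) - 2))
          = fun s : ℝ => (1 / a) * ((1 + s * a) * Real.log ((1 + s * a) ^ 2))
            - (2 / a) * (1 + s * a) := by
        funext s
        ring
      rw [hre]
      exact (continuous_const.mul (continuous_mul_log_sq.comp haffc)).sub
        (continuous_const.mul haffc)
    · intro s hs
      have hsa : 1 + s * a ≠ 0 := by
        intro h
        apply hs
        field_simp at h ⊢
        linarith
      have haff : HasDerivAt (fun s : ℝ => 1 + s * a) a s := by
        simpa using (hasDerivAt_mul_const (c := a) (x := s)).const_add 1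
      have h1 : HasDerivAt (fun s : ℝ => (1 + s * a) * Real.log ((1 + s * a) ^ 2))
          ((Real.log ((1 + s * a) ^ 2) + 2) * a) s := by
        have := (hasDerivAt_mul_log_sq hsa).comp s haff
        simpa [Function.comp_def] using this
      have h2 := (h1.const_mul (1 / a)).sub (haff.const_mul (2 / a))
      have hre : (fun s : ℝ => ((1 + s * a) / a) * (Real.log ((1 + s * a) ^ 2) - 2))
          = fun s : ℝ => (1 / a) * ((1 + s * a) * Real.log ((1 + s * a) ^ 2))
            - (2 / a) * (1 + s * a) := by
        funext s
        ring
      rw [hre]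
      convert h2 using 1
      · rfl
      · rfl
      · rfl
      field_simp
      ring
    · exact fun u v => intervalIntegrable_log_affine_sq a u v
  -- bound the FTC value
  have hP1t : |((1 + t * a) / a) * (Real.log ((1 + t * a) ^ 2) - 2)|
      ≤ (2 + 2 * M * Real.log M + 2 * M) / |a| := by
    have hy : |1 + t * a| ≤ M := hyle t ht le_rfl
    have hnum : |(1 + t * a) * (Real.log ((1 + t * a) ^ 2) - 2)|
        ≤ 2 + 2 * M * Real.log M + 2 * M := by
      have h1 : (1 + t * a) * (Real.log ((1 + t * a) ^ 2) - 2)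
          = (1 + t * a) * Real.log ((1 + t * a) ^ 2) - 2 * (1 + t * a) := by ring
      rw [h1]
      calc |(1 + t * a) * Real.log ((1 + t * a) ^ 2) - 2 * (1 + t * a)|
          ≤ |(1 + t * a) * Real.log ((1 + t * a) ^ 2)| + |2 * (1 + t * a)| := abs_sub _ _
        _ ≤ (2 + 2 * M * Real.log M) + 2 * M := by
            have hb := abs_mul_log_sq_le hy hM1
            have hc : |2 * (1 + t * a)| = 2 * |1 + t * a| := by
              rw [abs_mul]
              norm_num
            rw [hc]
            linarith
        _ = 2 + 2 * M * Real.log M + 2 * M := by ring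
    have hform : ((1 + t * a) / a) * (Real.log ((1 + t * a) ^ 2) - 2)
        = ((1 + t * a) * (Real.log ((1 + t * a) ^ 2) - 2)) / a := by ring
    rw [hform, abs_div]
    exact (div_le_div_iff_of_pos_right habspos).mpr hnum
  have hP10 : |((1 + 0 * a) / a) * (Real.log ((1 + 0 * a) ^ 2) - 2)| = 2 / |a| := by
    rw [zero_mul, add_zero, one_pow, Real.log_one]
    rw [show (1:ℝ) / a * (0 - 2) = (-2) / a by ring]
    rw [abs_div]
    norm_num
  have hIlog : (∫ s in Ioc (0:ℝ) t, |Real.log ((1 + s * a) ^ 2)|)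
      ≤ 4 * t * Real.log M + 2 * (2 + 2 * M * Real.log M + 2 * M) / |a| := by
    have hmono : (∫ s in Ioc (0:ℝ) t, |Real.log ((1 + s * a) ^ 2)|)
        ≤ ∫ s in Ioc (0:ℝ) t, (4 * Real.log M - Real.log ((1 + s * a) ^ 2)) :=
      setIntegral_mono_on hfint.abs ((integrable_const _).sub hfint) measurableSet_Ioc
        (fun s hs => abs_log_sq_le (hyle s hs.1.le hs.2) hM1)
    have hsplit : (∫ s in Ioc (0:ℝ) t, (4 * Real.log M - Real.log ((1 + s * a) ^ 2)))
        = t * (4 * Real.log M) - ∫ s in Ioc (0:ℝ) t, Real.log ((1 + s * a) ^ 2) := by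
      rw [integral_sub (integrable_const _) hfint, hconst]
    have h5 : -(∫ s in Ioc (0:ℝ) t, Real.log ((1 + s * a) ^ 2))
        ≤ (2 + 2 * M * Real.log M + 2 * M) / |a| + 2 / |a| := by
      rw [hval]
      have h6 := hP1t
      have h7 := hP10
      have h8 : -(((1 + t * a) / a) * (Real.log ((1 + t * a) ^ 2) - 2))
          ≤ |((1 + t * a) / a) * (Real.log ((1 + t * a) ^ 2) - 2)| := neg_le_abs _
      have h9 : ((1 + 0 * a) / a) * (Real.log ((1 + 0 * a) ^ 2) - 2)
          ≤ |((1 + 0 * a) / a) * (Real.log ((1 + 0 * a) ^ 2) - 2)| := le_abs_self _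
      linarith
    have h6 : (2:ℝ) / |a| ≤ (2 + 2 * M * Real.log M + 2 * M) / |a| := by
      apply (div_le_div_iff_of_pos_right habspos).mpr
      nlinarith [mul_nonneg (mul_nonneg (by norm_num : (0:ℝ) ≤ 2) hM0.le) hlogM]
    have h7 : 2 * (2 + 2 * M * Real.log M + 2 * M) / |a|
        = (2 + 2 * M * Real.log M + 2 * M) / |a| + (2 + 2 * M * Real.log M + 2 * M) / |a| := by
      ring
    linarith
  have habs2 : a ^ 2 = |a| * |a| := by
    rw [sq, ← abs_mul_abs_self]
  have hkey : t * (2 * a ^ 2) * (2 * (2 + 2 * M * Real.log M + 2 * M) / |a|)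
      = t * (4 * |a| * (2 + 2 * M * Real.log M + 2 * M)) := by
    have hc : 2 * (2 + 2 * M * Real.log M + 2 * M) / |a| * |a|
        = 2 * (2 + 2 * M * Real.log M + 2 * M) := div_mul_cancel₀ _ habs0
    calc t * (2 * a ^ 2) * (2 * (2 + 2 * M * Real.log M + 2 * M) / |a|)
        = (t * 2 * |a|) * (2 * (2 + 2 * M * Real.log M + 2 * M) / |a| * |a|) := by
          rw [habs2]; ring
      _ = (t * 2 * |a|) * (2 * (2 + 2 * M * Real.log M + 2 * M)) := by rw [hc]
      _ = t * (4 * |a| * (2 + 2 * M * Real.log M + 2 * M)) := by ring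
  calc (∫ s in Ioc (0:ℝ) t, ‖(t - s) * (4 * a ^ 2 + 2 * a ^ 2 * Real.log ((1 + s * a) ^ 2)
        - 2 * a ^ 2 * Real.log (a ^ 2))‖)
      ≤ ∫ s in Ioc (0:ℝ) t, (t * (4 * a ^ 2) + (t * (2 * a ^ 2)) * |Real.log ((1 + s * a) ^ 2)|
          + t * (2 * a ^ 2 * |Real.log (a ^ 2)|)) := step1
    _ = t * (t * (4 * a ^ 2)) + (t * (2 * a ^ 2))
          * (∫ s in Ioc (0:ℝ) t, |Real.log ((1 + s * a) ^ 2)|)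
        + t * (t * (2 * a ^ 2 * |Real.log (a ^ 2)|)) := step2
    _ ≤ t * (t * (4 * a ^ 2)) + (t * (2 * a ^ 2))
          * (4 * t * Real.log M + 2 * (2 + 2 * M * Real.log M + 2 * M) / |a|)
        + t * (t * (2 * a ^ 2 * |Real.log (a ^ 2)|)) := by
        have hnn : (0:ℝ) ≤ t * (2 * a ^ 2) := by positivity
        have := mul_le_mul_of_nonneg_left hIlog hnn
        linarith
    _ = t * (4 * a ^ 2 * t + (8 * t * (a ^ 2 * Real.log M)
          + 4 * |a| * (2 + 2 * M * Real.log M + 2 * M))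
          + 2 * a ^ 2 * |Real.log (a ^ 2)| * t) := by
        rw [mul_add, hkey]
        ring

end Stmt15Aux
end P3

section P4
namespace Stmt15Aux
open Real Set Filter intervalIntegral

lemma sq_mul_log_one_add_bound {t a : ℝ} (ht : 0 ≤ t) :
    a ^ 2 * Real.log (1 + t * |a|)
      ≤ (Real.log (1 + t) + Real.log 2) * a ^ 2 + |a ^ 2 * Real.log (a ^ 2)| := by
  have ha : (0:ℝ) ≤ |a| := abs_nonneg a
  have h0 : (0:ℝ) < 1 + t * |a| := by nlinarith
  have h1 : 1 + t * |a| ≤ (1 + t) * (1 + |a|) := by nlinarith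
  have h2 : Real.log (1 + t * |a|) ≤ Real.log (1 + t) + Real.log (1 + |a|) := by
    calc Real.log (1 + t * |a|) ≤ Real.log ((1 + t) * (1 + |a|)) := Real.log_le_log h0 h1
      _ = Real.log (1 + t) + Real.log (1 + |a|) := Real.log_mul (by positivity) (by positivity)
  have h4 : a ^ 2 * Real.log (1 + |a|) ≤ Real.log 2 * a ^ 2 + |a ^ 2 * Real.log (a ^ 2)| := by
    rcases le_or_gt (|a|) 1 with h5 | h5
    · have h6 : Real.log (1 + |a|) ≤ Real.log 2 := Real.log_le_log (by positivity) (by linarith)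
      have h7 := abs_nonneg (a ^ 2 * Real.log (a ^ 2))
      nlinarith [sq_nonneg a]
    · have h6 : Real.log (1 + |a|) ≤ Real.log 2 + Real.log |a| := by
        calc Real.log (1 + |a|) ≤ Real.log (2 * |a|) := Real.log_le_log (by positivity) (by linarith)
          _ = Real.log 2 + Real.log |a| := Real.log_mul (by norm_num) (by positivity)
      have h7 : a ^ 2 * Real.log (a ^ 2) = 2 * (a ^ 2 * Real.log |a|) := by
        rw [log_sq_eq_two_mul]
        ring
      have h8 : 0 ≤ Real.log |a| := Real.log_nonneg h5.le
      have h9 : |a ^ 2 * Real.log (a ^ 2)| = 2 * (a ^ 2 * Real.log |a|) := by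
        rw [← h7, abs_of_nonneg (by nlinarith [sq_nonneg a])]
      nlinarith [sq_nonneg a]
  have h10 : a ^ 2 * Real.log (1 + t * |a|) ≤ a ^ 2 * (Real.log (1 + t) + Real.log (1 + |a|)) :=
    mul_le_mul_of_nonneg_left h2 (sq_nonneg a)
  nlinarith [sq_nonneg a]

lemma abs_mul_log_one_add_bound {t a : ℝ} (ht : 0 ≤ t) :
    |a| * Real.log (1 + t * |a|) ≤ t * a ^ 2 := by
  have ha : (0:ℝ) ≤ |a| := abs_nonneg a
  have h0 : (0:ℝ) < 1 + t * |a| := by nlinarith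
  have h1 : Real.log (1 + t * |a|) ≤ t * |a| := by
    have := Real.log_le_sub_one_of_pos h0
    linarith
  have h2 := mul_le_mul_of_nonneg_left h1 ha
  have h3 : |a| * (t * |a|) = t * a ^ 2 := by
    rw [show a ^ 2 = |a| * |a| by rw [sq, ← abs_mul_abs_self]]
    ring
  linarith [h2, h3.le, h3.ge]

set_option maxHeartbeats 1000000 in
theorem main_aux {α : Type*} [MeasurableSpace α] (μ : Measure α) [IsProbabilityMeasure μ]
    (ψ : α → ℝ) (hmeas : Measurable ψ)
    (hψ : MemLp ψ 2 μ)
    (hnorm : ∫ x, (ψ x) ^ 2 ∂μ = 1)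
    (hlogint : Integrable (fun x => (ψ x) ^ 2 * Real.log ((ψ x) ^ 2)) μ)
    {t : ℝ} (ht : 0 ≤ t) :
    ∫ x, Phi1 ((1 + t * ψ x) ^ 2) ∂μ ≤
      t ^ 2 * ∫ x, (ψ x) ^ 2 * Real.log ((ψ x) ^ 2) ∂μ
      + (1 + t ^ 2) * Real.log (1 + t ^ 2)
      + (1 + |∫ x, ψ x ∂μ|) * t ^ 2 := by
  have hψ1 : Integrable ψ μ := hψ.integrable one_le_two
  have hψ2 : Integrable (fun x => ψ x ^ 2) μ := hψ.integrable_sq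
  set m := ∫ x, ψ x ∂μ with hm
  -- |m| ≤ 1
  have habs : |m| ≤ 1 := by
    have hexp : (fun x => (ψ x - m) ^ 2) = fun x => (ψ x ^ 2 - (2 * m) * ψ x) + m ^ 2 :=
      funext fun x => by ring
    have hvar : Integrable (fun x => (ψ x - m) ^ 2) μ := by
      rw [hexp]
      exact (hψ2.sub (hψ1.const_mul _)).add (integrable_const _)
    have ha1 : Integrable (fun x => ψ x ^ 2 - 2 * m * ψ x) μ := hψ2.sub (hψ1.const_mul _)
    have hvint : ∫ x, (ψ x - m) ^ 2 ∂μ = 1 - m ^ 2 := by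
      rw [hexp, integral_add ha1 (integrable_const _),
        integral_sub hψ2 (hψ1.const_mul _), MeasureTheory.integral_const_mul, hnorm, ← hm, MeasureTheory.integral_const]
      simp [measure_univ]
      ring
    have h0 : 0 ≤ 1 - m ^ 2 := by
      rw [← hvint]
      exact integral_nonneg fun x => sq_nonneg _
    exact (sq_le_one_iff_abs_le_one (a := m)).mp (by linarith : m ^ 2 ≤ 1)
  set ν := volume.restrict (Ioc (0:ℝ) t) with hν
  -- pointwise identity
  have hiden : ∀ x, Phi1 ((1 + t * ψ x) ^ 2)
      = t ^ 2 * (ψ x ^ 2 * Real.log (ψ x ^ 2)) + ∫ s, (t - s) * (4 * ψ x ^ 2 + 2 * ψ x ^ 2 * Real.log ((1 + s * ψ x) ^ 2) - 2 * ψ x ^ 2 * Real.log (ψ x ^ 2)) ∂ν := by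
    intro x
    have h := key_identity (ψ x) ht
    rwa [intervalIntegral.integral_of_le ht] at h
  -- measurability on the product
  have h1m : Measurable fun p : α × ℝ => ψ p.1 := hmeas.comp measurable_fst
  have hGmeas : AEStronglyMeasurable (fun p : α × ℝ => (t - p.2) * (4 * ψ p.1 ^ 2 + 2 * ψ p.1 ^ 2 * Real.log ((1 + p.2 * ψ p.1) ^ 2) - 2 * ψ p.1 ^ 2 * Real.log (ψ p.1 ^ 2))) (μ.prod ν) := by
    apply Measurable.aestronglyMeasurable
    exact (measurable_const.sub measurable_snd).mul
      (((((h1m.pow_const 2).const_mul 4).add (((h1m.pow_const 2).const_mul 2).mul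
        (Real.measurable_log.comp ((measurable_const.add (measurable_snd.mul h1m)).pow_const 2)))).sub
        (((h1m.pow_const 2).const_mul 2).mul (Real.measurable_log.comp (h1m.pow_const 2)))))
  -- sections are integrable
  have hsec : ∀ x, Integrable (fun s => (t - s) * (4 * ψ x ^ 2 + 2 * ψ x ^ 2 * Real.log ((1 + s * ψ x) ^ 2) - 2 * ψ x ^ 2 * Real.log (ψ x ^ 2))) ν := by
    intro x
    have h := intervalIntegrable_f (ψ x) t 0 t
    rw [intervalIntegrable_iff, uIoc_of_le ht] at h
    exact h
  -- dominating function integrable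
  have hI1 : Integrable (fun x => ψ x ^ 2 * Real.log (1 + t * |ψ x|)) μ := by
    apply Integrable.mono' ((hψ2.const_mul (Real.log (1 + t) + Real.log 2)).add hlogint.abs)
    · exact ((hmeas.pow_const 2).mul (Real.measurable_log.comp
        (measurable_const.add (hmeas.abs.const_mul t)))).aestronglyMeasurable
    · filter_upwards with x
      have h1 : (0:ℝ) ≤ ψ x ^ 2 * Real.log (1 + t * |ψ x|) := by
        apply mul_nonneg (sq_nonneg _)
        apply Real.log_nonneg
        nlinarith [abs_nonneg (ψ x)]
      rw [Real.norm_eq_abs, abs_of_nonneg h1]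
      exact sq_mul_log_one_add_bound ht
  have hI3 : Integrable (fun x => |ψ x| * Real.log (1 + t * |ψ x|)) μ := by
    apply Integrable.mono' (hψ2.const_mul t)
    · exact (hmeas.abs.mul (Real.measurable_log.comp
        (measurable_const.add (hmeas.abs.const_mul t)))).aestronglyMeasurable
    · filter_upwards with x
      have h1 : (0:ℝ) ≤ |ψ x| * Real.log (1 + t * |ψ x|) := by
        apply mul_nonneg (abs_nonneg _)
        apply Real.log_nonneg
        nlinarith [abs_nonneg (ψ x)]
      rw [Real.norm_eq_abs, abs_of_nonneg h1]
      exact abs_mul_log_one_add_bound ht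
  have hI4 : Integrable (fun x => ψ x ^ 2 * |Real.log (ψ x ^ 2)|) μ := by
    have heq : (fun x => ψ x ^ 2 * |Real.log (ψ x ^ 2)|)
        = fun x => |ψ x ^ 2 * Real.log (ψ x ^ 2)| :=
      funext fun x => by rw [abs_mul, abs_of_nonneg (sq_nonneg (ψ x))]
    rw [heq]
    exact hlogint.abs
  have hD : Integrable (fun x => t * (4 * ψ x ^ 2 * t
      + (8 * t * (ψ x ^ 2 * Real.log (1 + t * |ψ x|))
        + 4 * |ψ x| * (2 + 2 * (1 + t * |ψ x|) * Real.log (1 + t * |ψ x|)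
          + 2 * (1 + t * |ψ x|)))
      + 2 * ψ x ^ 2 * |Real.log (ψ x ^ 2)| * t)) μ := by
    have hform : (fun x => t * (4 * ψ x ^ 2 * t
        + (8 * t * (ψ x ^ 2 * Real.log (1 + t * |ψ x|))
          + 4 * |ψ x| * (2 + 2 * (1 + t * |ψ x|) * Real.log (1 + t * |ψ x|)
            + 2 * (1 + t * |ψ x|)))
        + 2 * ψ x ^ 2 * |Real.log (ψ x ^ 2)| * t))
        = fun x => ((((12 * t ^ 2) * ψ x ^ 2
            + (16 * t ^ 2) * (ψ x ^ 2 * Real.log (1 + t * |ψ x|)))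
            + (16 * t) * |ψ x|)
            + (8 * t) * (|ψ x| * Real.log (1 + t * |ψ x|)))
            + (2 * t ^ 2) * (ψ x ^ 2 * |Real.log (ψ x ^ 2)|) := by
      funext x
      have habs2 : ψ x ^ 2 = |ψ x| * |ψ x| := by rw [sq, ← abs_mul_abs_self]
      rw [habs2]
      ring
    rw [hform]
    exact ((((hψ2.const_mul _).add (hI1.const_mul _)).add (hψ1.abs.const_mul _)).add
      (hI3.const_mul _)).add (hI4.const_mul _)
  -- product integrability
  have hnormint : Integrable (fun x => ∫ s, ‖(t - s) * (4 * ψ x ^ 2 + 2 * ψ x ^ 2 * Real.log ((1 + s * ψ x) ^ 2) - 2 * ψ x ^ 2 * Real.log (ψ x ^ 2))‖ ∂ν) μ := by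
    apply Integrable.mono' hD
    · exact hGmeas.norm.integral_prod_right'
    · filter_upwards with x
      rw [Real.norm_eq_abs, abs_of_nonneg (integral_nonneg fun s => norm_nonneg _)]
      exact norm_bound ht (ψ x)
  have hGint : Integrable (fun p : α × ℝ => (t - p.2) * (4 * ψ p.1 ^ 2 + 2 * ψ p.1 ^ 2 * Real.log ((1 + p.2 * ψ p.1) ^ 2) - 2 * ψ p.1 ^ 2 * Real.log (ψ p.1 ^ 2))) (μ.prod ν) :=
    (integrable_prod_iff hGmeas).2 ⟨ae_of_all _ fun x => hsec x, hnormint⟩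
  have hinner : Integrable (fun x => ∫ s, (t - s) * (4 * ψ x ^ 2 + 2 * ψ x ^ 2 * Real.log ((1 + s * ψ x) ^ 2) - 2 * ψ x ^ 2 * Real.log (ψ x ^ 2)) ∂ν) μ := hGint.integral_prod_left
  -- step 1: split the integral
  have hstep1 : ∫ x, Phi1 ((1 + t * ψ x) ^ 2) ∂μ
      = t ^ 2 * (∫ x, ψ x ^ 2 * Real.log (ψ x ^ 2) ∂μ)
        + ∫ x, (∫ s, (t - s) * (4 * ψ x ^ 2 + 2 * ψ x ^ 2 * Real.log ((1 + s * ψ x) ^ 2) - 2 * ψ x ^ 2 * Real.log (ψ x ^ 2)) ∂ν) ∂μ := by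
    rw [show (fun x => Phi1 ((1 + t * ψ x) ^ 2))
        = fun x => t ^ 2 * (ψ x ^ 2 * Real.log (ψ x ^ 2)) + ∫ s, (t - s) * (4 * ψ x ^ 2 + 2 * ψ x ^ 2 * Real.log ((1 + s * ψ x) ^ 2) - 2 * ψ x ^ 2 * Real.log (ψ x ^ 2)) ∂ν from funext hiden]
    rw [integral_add (hlogint.const_mul (t ^ 2)) hinner, MeasureTheory.integral_const_mul]
  -- step 2 : Fubini
  have hswap : ∫ x, (∫ s, (t - s) * (4 * ψ x ^ 2 + 2 * ψ x ^ 2 * Real.log ((1 + s * ψ x) ^ 2) - 2 * ψ x ^ 2 * Real.log (ψ x ^ 2)) ∂ν) ∂μ = ∫ s, (∫ x, (t - s) * (4 * ψ x ^ 2 + 2 * ψ x ^ 2 * Real.log ((1 + s * ψ x) ^ 2) - 2 * ψ x ^ 2 * Real.log (ψ x ^ 2)) ∂μ) ∂ν :=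
    integral_integral_swap (f := fun x s => (t - s) * (4 * ψ x ^ 2 + 2 * ψ x ^ 2 * Real.log ((1 + s * ψ x) ^ 2) - 2 * ψ x ^ 2 * Real.log (ψ x ^ 2))) (by exact hGint)
  -- a.e. in s facts
  have hZae : ∀ᵐ s ∂ν, μ {x | 1 + s * ψ x = 0} = 0 := by
    have hBmeas : MeasurableSet {p : ℝ × α | 1 + p.1 * ψ p.2 = 0} := by
      have hmb : Measurable fun p : ℝ × α => 1 + p.1 * ψ p.2 :=
        measurable_const.add (measurable_fst.mul (hmeas.comp measurable_snd))
      exact hmb (measurableSet_singleton 0)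
    have hAmeas : MeasurableSet {p : α × ℝ | 1 + p.2 * ψ p.1 = 0} := by
      have hma : Measurable fun p : α × ℝ => 1 + p.2 * ψ p.1 :=
        measurable_const.add (measurable_snd.mul (hmeas.comp measurable_fst))
      exact hma (measurableSet_singleton 0)
    have hA0 : (μ.prod ν) {p : α × ℝ | 1 + p.2 * ψ p.1 = 0} = 0 := by
      rw [MeasureTheory.Measure.measure_prod_null hAmeas]
      refine ae_of_all _ fun x => ?_
      have hsub : (Prod.mk x ⁻¹' {p : α × ℝ | 1 + p.2 * ψ p.1 = 0}) ⊆ {-(ψ x)⁻¹} := by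
        intro s hs
        simp only [Set.mem_preimage, Set.mem_setOf_eq] at hs
        have hψx : ψ x ≠ 0 := by
          intro h
          rw [h] at hs
          norm_num at hs
        simp only [Set.mem_singleton_iff]
        field_simp
        linarith
      have hν0 : ν {-(ψ x)⁻¹} = 0 := by
        rw [hν, Measure.restrict_apply (measurableSet_singleton _)]
        exact measure_mono_null Set.inter_subset_left (Real.volume_singleton)
      exact measure_mono_null hsub hν0
    have hswap0 : (ν.prod μ) {p : ℝ × α | 1 + p.1 * ψ p.2 = 0} = 0 := by
      rw [← MeasureTheory.Measure.prod_swap, Measure.map_apply measurable_swap hBmeas]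
      have : Prod.swap ⁻¹' {p : ℝ × α | 1 + p.1 * ψ p.2 = 0}
          = {p : α × ℝ | 1 + p.2 * ψ p.1 = 0} := by
        ext p
        simp [Prod.swap]
      rw [this]
      exact hA0
    rw [MeasureTheory.Measure.measure_prod_null hBmeas] at hswap0
    filter_upwards [hswap0] with s hs
    exact hs
  have hsecae : ∀ᵐ s ∂ν, Integrable (fun x => (t - s) * (4 * ψ x ^ 2 + 2 * ψ x ^ 2 * Real.log ((1 + s * ψ x) ^ 2) - 2 * ψ x ^ 2 * Real.log (ψ x ^ 2))) μ := hGint.prod_left_ae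
  have hne1 : ∀ᵐ s ∂ν, s ≠ 1 := by
    rw [ae_iff]
    have : {s : ℝ | ¬s ≠ 1} = {1} := by
      ext s
      simp [not_not]
    rw [this, hν, Measure.restrict_apply (measurableSet_singleton _)]
    exact measure_mono_null Set.inter_subset_left (Real.volume_singleton)
  have hmem : ∀ᵐ s ∂ν, s ∈ Ioc (0:ℝ) t := by
    rw [hν]
    exact ae_restrict_mem measurableSet_Ioc
  -- the pointwise (in s) bound
  have haebound : ∀ᵐ s ∂ν, (∫ x, (t - s) * (4 * ψ x ^ 2 + 2 * ψ x ^ 2 * Real.log ((1 + s * ψ x) ^ 2) - 2 * ψ x ^ 2 * Real.log (ψ x ^ 2)) ∂μ)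
      ≤ (t - s) * (4 + 2 * |m| + 2 * Real.log (1 + s ^ 2)) := by
    filter_upwards [hZae, hsecae, hne1, hmem] with s hZs hsec1 hs1 hsmem
    rcases eq_or_lt_of_le hsmem.2 with heq | hst
    · have h0 : t - s = 0 := by rw [heq, sub_self]
      rw [show (fun x => (t - s) * (4 * ψ x ^ 2 + 2 * ψ x ^ 2 * Real.log ((1 + s * ψ x) ^ 2) - 2 * ψ x ^ 2 * Real.log (ψ x ^ 2))) = fun _ : α => (0:ℝ) from funext fun x => by
        rw [h0, zero_mul], MeasureTheory.integral_zero, h0, zero_mul]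
    · have hspos : 0 < s := hsmem.1
      have hts0 : (0:ℝ) < t - s := by linarith
      have h1s : (0:ℝ) < (1 - s) ^ 2 := by
        have hne : (1:ℝ) - s ≠ 0 := fun h => hs1 (by linarith)
        positivity
      have hmge : -1 ≤ m := (abs_le.mp habs).1
      have hc : (0:ℝ) < 1 + 2 * s * m + s ^ 2 := by
        nlinarith [mul_nonneg hspos.le (show (0:ℝ) ≤ 1 + m by linarith)]
      -- integrability of the inner function
      have hinner2 : Integrable (fun x => 4 * ψ x ^ 2
          + 2 * ψ x ^ 2 * Real.log ((1 + s * ψ x) ^ 2)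
          - 2 * ψ x ^ 2 * Real.log (ψ x ^ 2)) μ := by
        have h := hsec1.const_mul (t - s)⁻¹
        apply h.congr
        refine ae_of_all _ fun x => ?_
        field_simp
      have hexp2 : (fun x => (1 + s * ψ x) ^ 2)
          = fun x => (1 + (2 * s) * ψ x) + s ^ 2 * ψ x ^ 2 := funext fun x => by ring
      have hb1 : Integrable (fun x => 1 + (2 * s) * ψ x) μ :=
        (integrable_const _).add (hψ1.const_mul _)
      have hS2 : Integrable (fun x => (1 + s * ψ x) ^ 2) μ := by
        rw [hexp2]
        exact hb1.add (hψ2.const_mul _)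
      have hSval : ∫ x, (1 + s * ψ x) ^ 2 ∂μ = 1 + 2 * s * m + s ^ 2 := by
        rw [hexp2, integral_add hb1 (hψ2.const_mul _),
          integral_add (integrable_const _) (hψ1.const_mul _), MeasureTheory.integral_const_mul,
          MeasureTheory.integral_const_mul, hnorm, ← hm, MeasureTheory.integral_const]
        simp [measure_univ]
        try ring
      have hRint : Integrable (fun x => (4 * ψ x ^ 2
          + (2 / (1 + 2 * s * m + s ^ 2)) * (1 + s * ψ x) ^ 2)
          + (2 * (Real.log (1 + 2 * s * m + s ^ 2) - 1)) * ψ x ^ 2) μ :=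
        ((hψ2.const_mul 4).add (hS2.const_mul _)).add (hψ2.const_mul _)
      have hptw : ∀ᵐ x ∂μ, 4 * ψ x ^ 2 + 2 * ψ x ^ 2 * Real.log ((1 + s * ψ x) ^ 2)
          - 2 * ψ x ^ 2 * Real.log (ψ x ^ 2)
          ≤ (4 * ψ x ^ 2 + (2 / (1 + 2 * s * m + s ^ 2)) * (1 + s * ψ x) ^ 2)
            + (2 * (Real.log (1 + 2 * s * m + s ^ 2) - 1)) * ψ x ^ 2 := by
        have hZs' : ∀ᵐ x ∂μ, ¬(1 + s * ψ x = 0) := by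
          rw [ae_iff]
          simpa using hZs
        filter_upwards [hZs'] with x hx
        rcases eq_or_ne (ψ x) 0 with h0 | h0
        · rw [h0]
          simp only [mul_zero, zero_mul, add_zero, zero_pow, ne_eq, OfNat.ofNat_ne_zero,
            not_false_eq_true, mul_one, one_pow]
          have : (0:ℝ) ≤ 2 / (1 + 2 * s * m + s ^ 2) := by positivity
          nlinarith
        · have hy0 : (0:ℝ) < (1 + s * ψ x) ^ 2 := by
            have := pow_pos (abs_pos.mpr hx) 2
            rwa [sq_abs] at this
          have hx0 : (0:ℝ) < ψ x ^ 2 := by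
            have := pow_pos (abs_pos.mpr h0) 2
            rwa [sq_abs] at this
          have hy : (0:ℝ) < (1 + s * ψ x) ^ 2 / ψ x ^ 2 := div_pos hy0 hx0
          have hlog1 : Real.log (((1 + s * ψ x) ^ 2 / ψ x ^ 2) / (1 + 2 * s * m + s ^ 2))
              ≤ ((1 + s * ψ x) ^ 2 / ψ x ^ 2) / (1 + 2 * s * m + s ^ 2) - 1 :=
            Real.log_le_sub_one_of_pos (div_pos hy hc)
          have hlog2 : Real.log (((1 + s * ψ x) ^ 2 / ψ x ^ 2) / (1 + 2 * s * m + s ^ 2))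
              = Real.log ((1 + s * ψ x) ^ 2) - Real.log (ψ x ^ 2)
                - Real.log (1 + 2 * s * m + s ^ 2) := by
            rw [Real.log_div (ne_of_gt hy) (ne_of_gt hc),
              Real.log_div (ne_of_gt hy0) (ne_of_gt hx0)]
          rw [hlog2] at hlog1
          have hmul := mul_le_mul_of_nonneg_left hlog1
            (show (0:ℝ) ≤ 2 * ψ x ^ 2 by positivity)
          have hsimp : 2 * ψ x ^ 2 * (((1 + s * ψ x) ^ 2 / ψ x ^ 2) / (1 + 2 * s * m + s ^ 2))
              = (2 / (1 + 2 * s * m + s ^ 2)) * (1 + s * ψ x) ^ 2 := by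
            field_simp [ne_of_gt hx0, ne_of_gt hc]
          have e1 : 2 * ψ x ^ 2 * (((1 + s * ψ x) ^ 2 / ψ x ^ 2) / (1 + 2 * s * m + s ^ 2) - 1)
              = 2 * ψ x ^ 2 * (((1 + s * ψ x) ^ 2 / ψ x ^ 2) / (1 + 2 * s * m + s ^ 2))
                - 2 * ψ x ^ 2 := by ring
          have e2 : 2 * ψ x ^ 2 * (Real.log ((1 + s * ψ x) ^ 2) - Real.log (ψ x ^ 2)
                - Real.log (1 + 2 * s * m + s ^ 2))
              = 2 * ψ x ^ 2 * Real.log ((1 + s * ψ x) ^ 2)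
                - 2 * ψ x ^ 2 * Real.log (ψ x ^ 2)
                - 2 * ψ x ^ 2 * Real.log (1 + 2 * s * m + s ^ 2) := by ring
          rw [e1, e2, hsimp] at hmul
          linarith
      have hmono2 := integral_mono_ae hinner2 hRint hptw
      have hRval : ∫ x, ((4 * ψ x ^ 2
          + (2 / (1 + 2 * s * m + s ^ 2)) * (1 + s * ψ x) ^ 2)
          + (2 * (Real.log (1 + 2 * s * m + s ^ 2) - 1)) * ψ x ^ 2) ∂μ
          = 4 + 2 * Real.log (1 + 2 * s * m + s ^ 2) := by
        have hq1 : Integrable (fun x => 4 * ψ x ^ 2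
            + (2 / (1 + 2 * s * m + s ^ 2)) * (1 + s * ψ x) ^ 2) μ :=
          (hψ2.const_mul 4).add (hS2.const_mul _)
        rw [integral_add hq1 (hψ2.const_mul _),
          integral_add (hψ2.const_mul 4) (hS2.const_mul _), MeasureTheory.integral_const_mul,
          MeasureTheory.integral_const_mul, MeasureTheory.integral_const_mul, hnorm, hSval]
        field_simp
        ring
      rw [hRval] at hmono2
      have hlogc : Real.log (1 + 2 * s * m + s ^ 2) ≤ Real.log (1 + s ^ 2) + |m| := by
        have h1 : 1 + 2 * s * m + s ^ 2 ≤ (1 + s ^ 2) * (1 + |m|) := by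
          nlinarith [mul_le_mul_of_nonneg_left (le_abs_self m)
              (show (0:ℝ) ≤ 2 * s by linarith),
            mul_nonneg (abs_nonneg m) (sq_nonneg (1 - s))]
        calc Real.log (1 + 2 * s * m + s ^ 2)
            ≤ Real.log ((1 + s ^ 2) * (1 + |m|)) := Real.log_le_log hc h1
          _ = Real.log (1 + s ^ 2) + Real.log (1 + |m|) :=
            Real.log_mul (by positivity) (by positivity)
          _ ≤ Real.log (1 + s ^ 2) + |m| := by
            have := Real.log_le_sub_one_of_pos (show (0:ℝ) < 1 + |m| by positivity)
            linarith
      have hfin_inner : (∫ x, (4 * ψ x ^ 2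
          + 2 * ψ x ^ 2 * Real.log ((1 + s * ψ x) ^ 2)
          - 2 * ψ x ^ 2 * Real.log (ψ x ^ 2)) ∂μ)
          ≤ 4 + 2 * |m| + 2 * Real.log (1 + s ^ 2) := by linarith
      calc (∫ x, (t - s) * (4 * ψ x ^ 2 + 2 * ψ x ^ 2 * Real.log ((1 + s * ψ x) ^ 2) - 2 * ψ x ^ 2 * Real.log (ψ x ^ 2)) ∂μ)
          = (t - s) * ∫ x, (4 * ψ x ^ 2 + 2 * ψ x ^ 2 * Real.log ((1 + s * ψ x) ^ 2)
            - 2 * ψ x ^ 2 * Real.log (ψ x ^ 2)) ∂μ := MeasureTheory.integral_const_mul _ _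
        _ ≤ (t - s) * (4 + 2 * |m| + 2 * Real.log (1 + s ^ 2)) :=
            mul_le_mul_of_nonneg_left hfin_inner (by linarith)
  -- integrability of the bound and the comparison
  have hβcont : Continuous (fun s : ℝ => (t - s) * (4 + 2 * |m| + 2 * Real.log (1 + s ^ 2))) := by
    have hlogcont : Continuous (fun s : ℝ => Real.log (1 + s ^ 2)) :=
      Continuous.log (by fun_prop) (fun s => by positivity)
    fun_prop
  have hβint : Integrable (fun s : ℝ => (t - s) * (4 + 2 * |m| + 2 * Real.log (1 + s ^ 2))) ν := by
    rw [hν]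
    exact hβcont.integrableOn_Ioc
  have hmono3 := integral_mono_ae (hGint.integral_prod_right) hβint haebound
  -- value of the bound integral
  have hlogcont : Continuous (fun s : ℝ => Real.log (1 + s ^ 2)) :=
    Continuous.log (by fun_prop) (fun s => by positivity)
  have hb2 : ∫ s in (0:ℝ)..t, Real.log (1 + s ^ 2)
      = t * Real.log (1 + t ^ 2) - 2 * t + 2 * Real.arctan t := by
    have hderiv : ∀ u ∈ Set.uIcc (0:ℝ) t,
        HasDerivAt (fun s => s * Real.log (1 + s ^ 2) - 2 * s + 2 * Real.arctan s)
          (Real.log (1 + u ^ 2)) u := by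
      intro u _
      have h1 : HasDerivAt (fun s : ℝ => 1 + s ^ 2) (2 * u) u := by
        simpa using (hasDerivAt_pow 2 u).const_add 1
      have h2 : HasDerivAt (fun s : ℝ => Real.log (1 + s ^ 2)) ((1 + u ^ 2)⁻¹ * (2 * u)) u := by
        have := (Real.hasDerivAt_log (by positivity : (1:ℝ) + u ^ 2 ≠ 0)).comp u h1
        simpa [Function.comp_def] using this
      have h3 := ((hasDerivAt_id u).mul h2).sub ((hasDerivAt_id u).const_mul 2)
      have h4 := h3.add ((Real.hasDerivAt_arctan u).const_mul 2)
      convert h4 using 1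
      · rfl
      · rfl
      · rfl
      have hne : (1:ℝ) + u ^ 2 ≠ 0 := by positivity
      simp only [id]
      field_simp
      ring
    rw [intervalIntegral.integral_eq_sub_of_hasDerivAt hderiv
      (hlogcont.intervalIntegrable 0 t)]
    simp [Real.arctan_zero]
  have hb3 : ∫ s in (0:ℝ)..t, s * Real.log (1 + s ^ 2)
      = ((1 + t ^ 2) * Real.log (1 + t ^ 2) - t ^ 2) / 2 := by
    have hderiv : ∀ u ∈ Set.uIcc (0:ℝ) t,
        HasDerivAt (fun s => ((1 + s ^ 2) * Real.log (1 + s ^ 2) - s ^ 2) / 2)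
          (u * Real.log (1 + u ^ 2)) u := by
      intro u _
      have h1 : HasDerivAt (fun s : ℝ => 1 + s ^ 2) (2 * u) u := by
        simpa using (hasDerivAt_pow 2 u).const_add 1
      have h2 : HasDerivAt (fun s : ℝ => Real.log (1 + s ^ 2)) ((1 + u ^ 2)⁻¹ * (2 * u)) u := by
        have := (Real.hasDerivAt_log (by positivity : (1:ℝ) + u ^ 2 ≠ 0)).comp u h1
        simpa [Function.comp_def] using this
      have h1sq : HasDerivAt (fun s : ℝ => s ^ 2) (2 * u) u := by
        simpa using hasDerivAt_pow 2 u
      have h3 := ((h1.mul h2).sub h1sq).div_const 2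
      convert h3 using 1
      · rfl
      · rfl
      · rfl
      have hne : (1:ℝ) + u ^ 2 ≠ 0 := by positivity
      field_simp
      ring
    rw [intervalIntegral.integral_eq_sub_of_hasDerivAt hderiv
      ((continuous_id.mul hlogcont).intervalIntegrable 0 t)]
    norm_num
  have hbt : ∫ s in (0:ℝ)..t, (t - s) = t ^ 2 / 2 := by
    rw [intervalIntegral.integral_sub (intervalIntegrable_const)
      (continuous_id'.intervalIntegrable 0 t)]
    simp [integral_id]
    ring
  have hβval : (∫ s, (t - s) * (4 + 2 * |m| + 2 * Real.log (1 + s ^ 2)) ∂ν)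
      = (4 + 2 * |m|) * (t ^ 2 / 2) + (2 * t) * (t * Real.log (1 + t ^ 2) - 2 * t
          + 2 * Real.arctan t) - 2 * (((1 + t ^ 2) * Real.log (1 + t ^ 2) - t ^ 2) / 2) := by
    rw [hν, ← intervalIntegral.integral_of_le ht]
    have hsplit : (fun s : ℝ => (t - s) * (4 + 2 * |m| + 2 * Real.log (1 + s ^ 2)))
        = fun s : ℝ => ((4 + 2 * |m|) * (t - s) + (2 * t) * Real.log (1 + s ^ 2))
          - 2 * (s * Real.log (1 + s ^ 2)) := funext fun s => by ring
    rw [hsplit]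
    have hi1 : IntervalIntegrable (fun s : ℝ => (4 + 2 * |m|) * (t - s)) volume 0 t :=
      (continuous_const.mul (continuous_const.sub continuous_id')).intervalIntegrable 0 t
    have hi2 : IntervalIntegrable (fun s : ℝ => (2 * t) * Real.log (1 + s ^ 2)) volume 0 t :=
      (continuous_const.mul hlogcont).intervalIntegrable 0 t
    have hi3 : IntervalIntegrable (fun s : ℝ => 2 * (s * Real.log (1 + s ^ 2))) volume 0 t :=
      (continuous_const.mul (continuous_id'.mul hlogcont)).intervalIntegrable 0 t
    rw [intervalIntegral.integral_sub (hi1.add hi2) hi3,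
      intervalIntegral.integral_add hi1 hi2, intervalIntegral.integral_const_mul,
      intervalIntegral.integral_const_mul, intervalIntegral.integral_const_mul,
      hbt, hb2, hb3]
  -- the scalar inequality 4 t arctan t ≤ 2t² + 2 log(1+t²)
  have harctan : ∀ u : ℝ, 0 ≤ u → Real.arctan u ≤ u := by
    intro u hu
    have h0 : (0:ℝ) ≤ Real.arctan u := by
      have := Real.arctan_strictMono.monotone hu
      rwa [Real.arctan_zero] at this
    have h1 : Real.arctan u ≤ Real.tan (Real.arctan u) :=
      Real.le_tan h0 (Real.arctan_lt_pi_div_two u)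
    rwa [Real.tan_arctan] at h1
  have hK : 4 * (t * Real.arctan t) ≤ 2 * t ^ 2 + 2 * Real.log (1 + t ^ 2) := by
    have hderiv : ∀ u ∈ Set.uIcc (0:ℝ) t,
        HasDerivAt (fun s => 2 * s ^ 2 + 2 * Real.log (1 + s ^ 2) - 4 * (s * Real.arctan s))
          (4 * (u - Real.arctan u)) u := by
      intro u _
      have h1 : HasDerivAt (fun s : ℝ => 1 + s ^ 2) (2 * u) u := by
        simpa using (hasDerivAt_pow 2 u).const_add 1
      have h2 : HasDerivAt (fun s : ℝ => Real.log (1 + s ^ 2)) ((1 + u ^ 2)⁻¹ * (2 * u)) u := by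
        have := (Real.hasDerivAt_log (by positivity : (1:ℝ) + u ^ 2 ≠ 0)).comp u h1
        simpa [Function.comp_def] using this
      have h3 : HasDerivAt (fun s : ℝ => 2 * s ^ 2) (2 * (2 * u)) u := by
        simpa using (hasDerivAt_pow 2 u).const_mul 2
      have h4 := ((hasDerivAt_id u).mul (Real.hasDerivAt_arctan u)).const_mul 4
      have h5 := (h3.add (h2.const_mul 2)).sub h4
      convert h5 using 1
      · rfl
      · rfl
      · rfl
      have hne : (1:ℝ) + u ^ 2 ≠ 0 := by positivity
      simp only [id]
      field_simp
      ring
    have hacont : Continuous fun u : ℝ => 4 * (u - Real.arctan u) :=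
      continuous_const.mul (continuous_id'.sub Real.continuous_arctan)
    have hJ := intervalIntegral.integral_eq_sub_of_hasDerivAt hderiv
      (hacont.intervalIntegrable 0 t)
    have hnn : 0 ≤ ∫ s in (0:ℝ)..t, 4 * (s - Real.arctan s) := by
      apply intervalIntegral.integral_nonneg ht
      intro u hu
      have := harctan u hu.1
      linarith
    rw [hJ] at hnn
    norm_num [Real.log_one] at hnn
    nlinarith [hnn]
  -- put everything together
  rw [hstep1, hswap]
  have hfin2 : (∫ s, (∫ x, (t - s) * (4 * ψ x ^ 2 + 2 * ψ x ^ 2 * Real.log ((1 + s * ψ x) ^ 2) - 2 * ψ x ^ 2 * Real.log (ψ x ^ 2)) ∂μ) ∂ν)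
      ≤ (1 + t ^ 2) * Real.log (1 + t ^ 2) + (1 + |m|) * t ^ 2 := by
    rw [hβval] at hmono3
    nlinarith [hmono3, hK]
  linarith [hfin2]

end Stmt15Aux
end P4
/-- Lemma A.2: for a probability measure μ and ψ with ‖ψ‖_{L²(μ)} = 1,
    ∫ Φ₁((1+tψ)²) dμ ≤ t²∫ ψ²log(ψ²) dμ + (1+t²)log(1+t²) + (1+|⟨ψ⟩_μ|)t². -/
theorem stmt_15 {α : Type*} [MeasurableSpace α] (μ : Measure α) [IsProbabilityMeasure μ]
    (ψ : α → ℝ) (hψ : MemLp ψ 2 μ)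
    (hnorm : ∫ x, (ψ x) ^ 2 ∂μ = 1)
    (hlogint : Integrable (fun x => (ψ x) ^ 2 * Real.log ((ψ x) ^ 2)) μ)
    (hΦint : ∀ t : ℝ, Integrable (fun x => Phi1 ((1 + t * ψ x) ^ 2)) μ) :
    ∀ t : ℝ,
      ∫ x, Phi1 ((1 + t * ψ x) ^ 2) ∂μ ≤
        t ^ 2 * ∫ x, (ψ x) ^ 2 * Real.log ((ψ x) ^ 2) ∂μ
        + (1 + t ^ 2) * Real.log (1 + t ^ 2)
        + (1 + |∫ x, ψ x ∂μ|) * t ^ 2 := by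
  intro t
  obtain ⟨ψ', hψ'sm, hae⟩ := hψ.1
  have hmeas' : Measurable ψ' := hψ'sm.measurable
  have hψ' : MemLp ψ' 2 μ := hψ.ae_eq hae
  have hae2 : (fun x => ψ x ^ 2) =ᵐ[μ] fun x => ψ' x ^ 2 :=
    hae.mono fun x hx => by simp only [hx]
  have hae3 : (fun x => ψ x ^ 2 * Real.log (ψ x ^ 2))
      =ᵐ[μ] fun x => ψ' x ^ 2 * Real.log (ψ' x ^ 2) :=
    hae.mono fun x hx => by simp only [hx]
  have haePhi : (fun x => Phi1 ((1 + t * ψ x) ^ 2))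
      =ᵐ[μ] fun x => Phi1 ((1 + t * ψ' x) ^ 2) :=
    hae.mono fun x hx => by simp only [hx]
  have hnorm' : ∫ x, ψ' x ^ 2 ∂μ = 1 := by
    rw [← integral_congr_ae hae2]
    exact hnorm
  have hlogint' : Integrable (fun x => ψ' x ^ 2 * Real.log (ψ' x ^ 2)) μ :=
    hlogint.congr hae3
  rw [integral_congr_ae haePhi, integral_congr_ae hae3, integral_congr_ae hae]
  rcases le_or_gt 0 t with ht | ht
  · exact Stmt15Aux.main_aux μ ψ' hmeas' hψ' hnorm' hlogint' ht
  · have hnorm'' : ∫ x, (-ψ' x) ^ 2 ∂μ = 1 := by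
      simpa using hnorm'
    have hlogint'' : Integrable (fun x => (-ψ' x) ^ 2 * Real.log ((-ψ' x) ^ 2)) μ := by
      simpa using hlogint'
    have hneg := Stmt15Aux.main_aux μ (fun x => -ψ' x) hmeas'.neg hψ'.neg hnorm''
      hlogint'' (t := -t) (by linarith)
    simp only [neg_mul_neg, neg_sq, integral_neg, abs_neg] at hneg
    exact hneg
end

section
/- Let μ be a probability measure, q > 2, and ξ ∈ L^q(μ). Then with Φ₁(s) = s log s - s + 1: ∫ Φ₁(ξ²) dμ ≤ (q/(q-2)) ‖ξ-1‖²_{L^q(μ)} + ((2q-6)/(q-2)) ‖ξ-1‖²_{L²(μ)} + Φ₁(1 + ‖ξ-1‖²_{L²(μ)}). -/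
open MeasureTheory

/-- log x ≤ (x - x⁻¹)/2 for x ≥ 1 -/
lemma log_le_half {x : ℝ} (hx : 1 ≤ x) : Real.log x ≤ (x - x⁻¹) / 2 := by
  have h0 : (0:ℝ) < 1 := one_pos
  set g : ℝ → ℝ := fun y => (y - y⁻¹) / 2 - Real.log y with hgdef
  have key : MonotoneOn g (Set.Icc 1 x) := by
    apply monotoneOn_of_deriv_nonneg (convex_Icc 1 x)
    · apply ContinuousOn.sub
      · apply ContinuousOn.div_const
        apply ContinuousOn.sub continuousOn_id
        apply ContinuousOn.inv₀ continuousOn_id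
        intro y hy
        rcases hy with ⟨h1, _⟩; intro h; simp only [id_eq] at h; rw [h] at h1; norm_num at h1
      · apply Real.continuousOn_log.mono
        intro y hy
        simp only [Set.mem_compl_iff, Set.mem_singleton_iff]
        rcases hy with ⟨h1, _⟩
        intro h; rw [h] at h1; linarith
    · intro y hy
      rw [interior_Icc] at hy
      have hy0 : y ≠ 0 := by rcases hy with ⟨h1, _⟩; intro h; rw [h] at h1; linarith
      have : HasDerivAt g ((1 - -(y^2)⁻¹)/2 - y⁻¹) y := by
        exact (((hasDerivAt_id y).sub (hasDerivAt_inv hy0)).div_const 2).sub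
          (Real.hasDerivAt_log hy0)
      exact this.differentiableAt.differentiableWithinAt
    · intro y hy
      rw [interior_Icc] at hy
      have hy1 : 1 < y := hy.1
      have hy0 : y ≠ 0 := by positivity
      have hd : HasDerivAt g ((1 - -(y^2)⁻¹)/2 - y⁻¹) y :=
        (((hasDerivAt_id y).sub (hasDerivAt_inv hy0)).div_const 2).sub
          (Real.hasDerivAt_log hy0)
      rw [hd.deriv]
      have hy2 : (0:ℝ) < y^2 := by positivity
      have e : (1 - -(y^2)⁻¹)/2 - y⁻¹ = (y-1)^2 / (2*y^2) := by
        field_simp; ring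
      rw [e]; positivity
  have h1 : g 1 ≤ g x := key (Set.left_mem_Icc.2 hx) (Set.right_mem_Icc.2 hx) hx
  simp only [hgdef, Real.log_one, inv_one, sub_self, zero_div, zero_sub, neg_nonpos,
    zero_sub] at h1
  linarith

/-- log x ≤ (x-1) - (x-1)²/2 for 0 < x ≤ 1 -/
lemma log_le_quad_left {x : ℝ} (hx0 : 0 < x) (hx1 : x ≤ 1) :
    Real.log x ≤ (x - 1) - (x - 1)^2 / 2 := by
  set g : ℝ → ℝ := fun y => Real.log y - (y - 1) + (y - 1)^2 / 2 with hgdef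
  have key : MonotoneOn g (Set.Icc x 1) := by
    apply monotoneOn_of_deriv_nonneg (convex_Icc x 1)
    · apply ContinuousOn.add
      · apply ContinuousOn.sub
        · apply Real.continuousOn_log.mono
          intro y hy
          simp only [Set.mem_compl_iff, Set.mem_singleton_iff]
          rcases hy with ⟨h1, _⟩
          intro h; rw [h] at h1; linarith
        · fun_prop
      · fun_prop
    · intro y hy
      rw [interior_Icc] at hy
      have hy0 : y ≠ 0 := ne_of_gt (lt_trans hx0 hy.1)
      have hd : HasDerivAt g (y⁻¹ - 1 + (2*(y-1)^1*1)/2) y := by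
        exact ((Real.hasDerivAt_log hy0).sub ((hasDerivAt_id y).sub_const 1)).add
          ((((hasDerivAt_id y).sub_const 1).pow 2).div_const 2)
      exact hd.differentiableAt.differentiableWithinAt
    · intro y hy
      rw [interior_Icc] at hy
      have hy0' : 0 < y := lt_trans hx0 hy.1
      have hy0 : y ≠ 0 := ne_of_gt hy0'
      have hd : HasDerivAt g (y⁻¹ - 1 + (2*(y-1)^1*1)/2) y :=
        ((Real.hasDerivAt_log hy0).sub ((hasDerivAt_id y).sub_const 1)).add
          ((((hasDerivAt_id y).sub_const 1).pow 2).div_const 2)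
      rw [hd.deriv]
      have e : y⁻¹ - 1 + (2*(y-1)^1*1)/2 = (y-1)^2 / y := by
        field_simp; ring
      rw [e]
      positivity
  have h1 : g x ≤ g 1 := key (Set.left_mem_Icc.2 hx1) (Set.right_mem_Icc.2 hx1) hx1
  simp only [hgdef, Real.log_one] at h1
  norm_num at h1
  linarith

/-- log(1+u²) ≤ u for u ≥ 1 -/
lemma log_one_add_sq_le {u : ℝ} (hu : 1 ≤ u) : Real.log (1 + u^2) ≤ u := by
  have hu0 : 0 ≤ u := by linarith
  rw [Real.log_le_iff_le_exp (by positivity)]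
  have h := Real.sum_le_exp_of_nonneg hu0 4
  have e : ∑ i ∈ Finset.range 4, u ^ i / (Nat.factorial i) = 1 + u + u^2/2 + u^3/6 := by
    simp [Finset.sum_range_succ, Nat.factorial]
    try ring
  rw [e] at h
  nlinarith [sq_nonneg (u - 3), sq_nonneg u]

/-- Φ₁ is monotone on [1, ∞) -/
lemma Phi1_mono {a b : ℝ} (ha : 1 ≤ a) (hab : a ≤ b) : Phi1 a ≤ Phi1 b := by
  have ha0 : 0 < a := by linarith
  have hb0 : 0 < b := by linarith
  have h1 : Real.log (a/b) ≤ a/b - 1 := Real.log_le_sub_one_of_pos (by positivity)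
  rw [Real.log_div (ne_of_gt ha0) (ne_of_gt hb0)] at h1
  have h2 : b * (Real.log a - Real.log b) ≤ b * (a/b - 1) :=
    mul_le_mul_of_nonneg_left h1 (le_of_lt hb0)
  have h3 : b * (a/b - 1) = a - b := by field_simp
  have h4 : 0 ≤ Real.log a := Real.log_nonneg ha
  have h5 : a * Real.log a ≤ b * Real.log a := by nlinarith
  simp only [Phi1]
  nlinarith

lemma main_ineq {u a b : ℝ} (ha : a = (1+u)^2) (hb : b = 1+u^2) (ha0 : 0 < a) :
    a * Real.log (a/b) + 2*u*Real.log b ≤ 3*u^2 + 2*u := by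
  have hb1 : (1:ℝ) ≤ b := by nlinarith [sq_nonneg u]
  have hb0 : 0 < b := by linarith
  have hab : a - b = 2*u := by rw [ha, hb]; ring
  have hlogb0 : 0 ≤ Real.log b := Real.log_nonneg hb1
  rcases le_or_gt 0 u with hu0 | hu0
  · -- u ≥ 0 : a ≥ b ≥ 1
    have hba : b ≤ a := by nlinarith
    have hx1 : 1 ≤ a/b := (one_le_div hb0).2 hba
    have h1 : Real.log (a/b) ≤ (a/b - (a/b)⁻¹)/2 := log_le_half hx1
    have h1' : a * Real.log (a/b) ≤ a * ((a/b - (a/b)⁻¹)/2) :=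
      mul_le_mul_of_nonneg_left h1 (le_of_lt ha0)
    have e1 : a * ((a/b - (a/b)⁻¹)/2) = (a^2 - b^2)/(2*b) := by
      rw [inv_div]
      field_simp
    rw [e1] at h1'
    rcases le_or_gt u 1 with hu1 | hu1
    · have h2 : Real.log b ≤ u^2 := by
        have := Real.log_le_sub_one_of_pos hb0
        rw [hb] at this ⊢; linarith
      have h2' : 2*u*Real.log b ≤ 2*u*u^2 :=
        mul_le_mul_of_nonneg_left h2 (by linarith)
      have h3 : (a^2 - b^2)/(2*b) ≤ 3*u^2 + 2*u - 2*u*u^2 := by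
        rw [div_le_iff₀ (by linarith)]
        have hid : (3*u^2+2*u-2*u*u^2)*(2*b) - (a^2-b^2)
            = 2*(u^2*(1-u)*(2*u^2-u+1)) := by rw [ha, hb]; ring
        have hpos : (0:ℝ) ≤ u^2*(1-u)*(2*u^2-u+1) := by
          apply mul_nonneg (mul_nonneg (sq_nonneg u) (by linarith))
          nlinarith [sq_nonneg (4*u-1)]
        linarith
      linarith [h1', h2', h3]
    · have h2 : Real.log b ≤ u := by
        rw [hb]; exact log_one_add_sq_le (le_of_lt hu1)
      have h2' : 2*u*Real.log b ≤ 2*u*u :=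
        mul_le_mul_of_nonneg_left h2 (by linarith)
      have h3 : (a^2 - b^2)/(2*b) ≤ 3*u^2 + 2*u - 2*u*u := by
        rw [div_le_iff₀ (by linarith)]
        have hid : (3*u^2+2*u-2*u*u)*(2*b) - (a^2-b^2) = 2*(u^2*(u^2-1)) := by
          rw [ha, hb]; ring
        have hpos : (0:ℝ) ≤ u^2*(u^2-1) :=
          mul_nonneg (sq_nonneg u) (by nlinarith)
        linarith
      linarith [h1', h2', h3]
  · -- u < 0
    have hx0 : 0 < a/b := by positivity
    have hx1 : a/b ≤ 1 := by
      rw [div_le_one hb0]; nlinarith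
    have h1 : Real.log (a/b) ≤ (a/b - 1) - (a/b - 1)^2/2 := log_le_quad_left hx0 hx1
    have h1' : a * Real.log (a/b) ≤ a * ((a/b - 1) - (a/b - 1)^2/2) :=
      mul_le_mul_of_nonneg_left h1 (le_of_lt ha0)
    have e1 : a * ((a/b - 1) - (a/b - 1)^2/2) = (2*a*b*(a-b) - a*(a-b)^2)/(2*b^2) := by
      field_simp
    rw [e1, hab] at h1'
    have h2 : 2*u*Real.log b ≤ 0 :=
      mul_nonpos_of_nonpos_of_nonneg (by linarith) hlogb0
    have h3 : (2*a*b*(2*u) - a*(2*u)^2)/(2*b^2) ≤ 3*u^2 + 2*u := by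
      rw [div_le_iff₀ (by positivity)]
      have hid : (3*u^2+2*u)*(2*b^2) - (2*a*b*(2*u) - a*(2*u)^2)
          = 2*(u*(2*u+1))^2 + 6*(u^3)^2 := by rw [ha, hb]; ring
      nlinarith [sq_nonneg (u*(2*u+1)), sq_nonneg (u^3)]
    linarith [h1', h2, h3]

/-- pointwise key inequality, nonnegative case -/
lemma pointwise_P0 {s : ℝ} (hs : 0 ≤ s) :
    Phi1 (s^2) ≤ 3*(s-1)^2 + Phi1 (1 + (s-1)^2) := by
  rcases eq_or_lt_of_le hs with h0 | hs0
  · -- s = 0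
    simp only [← h0, Phi1]
    norm_num
    have : (0:ℝ) ≤ Real.log 2 := Real.log_nonneg (by norm_num)
    nlinarith
  · have ha : s^2 = (1+(s-1))^2 := by ring
    have ha0 : (0:ℝ) < s^2 := by positivity
    have hb0 : (0:ℝ) < 1 + (s-1)^2 := by positivity
    have main := main_ineq (u := s-1) (a := s^2) (b := 1+(s-1)^2) ha rfl ha0
    have hlogsplit : Real.log (s^2) =
        Real.log (s^2/(1+(s-1)^2)) + Real.log (1+(s-1)^2) := by
      rw [Real.log_div (ne_of_gt ha0) (ne_of_gt hb0)]; ring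
    simp only [Phi1]
    rw [hlogsplit]
    nlinarith [main]

/-- pointwise key inequality, general case -/
lemma pointwise_P (r : ℝ) : Phi1 (r^2) ≤ 3*(r-1)^2 + Phi1 (1 + (r-1)^2) := by
  rcases le_or_gt 0 r with h | h
  · exact pointwise_P0 h
  · have h1 : Phi1 (r^2) = Phi1 ((-r)^2) := by rw [neg_pow]; norm_num
    have h2 := pointwise_P0 (s := -r) (by linarith)
    have h3 : (-r-1)^2 ≤ (r-1)^2 := by nlinarith
    have h4 : Phi1 (1 + (-r-1)^2) ≤ Phi1 (1 + (r-1)^2) :=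
      Phi1_mono (by nlinarith [sq_nonneg (-r-1)]) (by linarith)
    rw [h1]
    calc Phi1 ((-r)^2) ≤ 3*(-r-1)^2 + Phi1 (1 + (-r-1)^2) := h2
      _ ≤ 3*(r-1)^2 + Phi1 (1 + (r-1)^2) := by linarith

/-- tangent trick: (p-1) A log A ≤ A^p / c - A + A log c for A ≥ 1, c > 0, p > 1 -/
lemma tangent_bound {A c p : ℝ} (hA : 1 ≤ A) (hc : 0 < c) (hp : 1 < p) :
    (p - 1) * (A * Real.log A) ≤ A ^ p / c - A + A * Real.log c := by
  have hA0 : 0 < A := by linarith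
  have hpow : (0:ℝ) < A ^ (p-1) := Real.rpow_pos_of_pos hA0 _
  have h := Real.log_le_sub_one_of_pos (show (0:ℝ) < A ^ (p-1) / c by positivity)
  rw [Real.log_div (ne_of_gt hpow) (ne_of_gt hc), Real.log_rpow hA0] at h
  have h' : A * ((p-1) * Real.log A - Real.log c) ≤ A * (A ^ (p-1) / c - 1) :=
    mul_le_mul_of_nonneg_left h (by linarith)
  have e2 : A * A ^ (p-1) = A ^ p := by
    nth_rewrite 1 [← Real.rpow_one A]
    rw [← Real.rpow_add hA0, show (1:ℝ)+(p-1) = p by ring]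
  have e : A * (A ^ (p-1) / c - 1) = A ^ p / c - A := by
    rw [mul_sub, mul_one, mul_div_assoc', e2]
  rw [e] at h'
  nlinarith [h']

/-- convexity bound: (1+y)^p ≤ (1+N)^(p-1) + y^p * ((1+N)^(p-1) * N^(1-p)) -/
lemma conv_pt {y N p : ℝ} (hy : 0 ≤ y) (hN : 0 < N) (hp : 1 ≤ p) :
    (1+y) ^ p ≤ (1+N) ^ (p-1) + y ^ p * ((1+N) ^ (p-1) * N ^ (1-p)) := by
  have hN1 : (0:ℝ) < 1 + N := by linarith
  have hcx := convexOn_rpow hp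
  have hmem1 : (1+N) ∈ Set.Ici (0:ℝ) := by simp; linarith
  have hmem2 : y*(1+N)/N ∈ Set.Ici (0:ℝ) := by simp; positivity
  have ha : (0:ℝ) ≤ 1/(1+N) := by positivity
  have hb : (0:ℝ) ≤ N/(1+N) := by positivity
  have hab : 1/(1+N) + N/(1+N) = 1 := by field_simp
  have h := hcx.2 hmem1 hmem2 ha hb hab
  simp only [smul_eq_mul] at h
  have harg : 1/(1+N) * (1+N) + N/(1+N) * (y*(1+N)/N) = 1 + y := by
    field_simp
  rw [harg] at h
  refine le_trans h (le_of_eq ?_)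
  have e1 : 1/(1+N) * (1+N)^p = (1+N)^(p-1) := by
    rw [Real.rpow_sub hN1, Real.rpow_one]
    ring
  have e2 : (y*(1+N)/N)^p = y^p * (1+N)^p / N^p := by
    rw [Real.div_rpow (by positivity) (le_of_lt hN), Real.mul_rpow hy (le_of_lt hN1)]
  have e3 : N/(1+N) * (y^p * (1+N)^p / N^p) = y^p * ((1+N)^(p-1) * N^(1-p)) := by
    rw [Real.rpow_sub hN1, Real.rpow_sub hN, Real.rpow_one, Real.rpow_one]
    field_simp
  rw [e1, e2, e3]

lemma sq_rpow_half (z : ℝ) (q : ℝ) : ((z^2):ℝ) ^ (q/2) = |z| ^ q := by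
  rw [← sq_abs, ← Real.rpow_natCast |z| 2, ← Real.rpow_mul (abs_nonneg z)]
  norm_num
  rw [show (2:ℝ) * (q/2) = q by ring]

/-- Proposition A.3 (ii): for μ a probability measure, q > 2 and ξ ∈ L^q(μ),
    ∫ Φ₁(ξ²) dμ ≤ (q/(q-2))‖ξ-1‖²_{L^q} + ((2q-6)/(q-2))‖ξ-1‖²_{L²}
                    + Φ₁(1 + ‖ξ-1‖²_{L²}). -/
theorem stmt_17 {α : Type*} [MeasurableSpace α] (μ : Measure α) [IsProbabilityMeasure μ]
    (q : ℝ) (hq : 2 < q) (ξ : α → ℝ)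
    (hLq : MemLp ξ (ENNReal.ofReal q) μ)
    (hΦint : Integrable (fun x => Phi1 ((ξ x) ^ 2)) μ) :
    ∫ x, Phi1 ((ξ x) ^ 2) ∂μ ≤
      q / (q - 2) * (∫ x, |ξ x - 1| ^ q ∂μ) ^ (2 / q)
      + (2 * q - 6) / (q - 2) * ∫ x, (ξ x - 1) ^ 2 ∂μ
      + Phi1 (1 + ∫ x, (ξ x - 1) ^ 2 ∂μ) := by
  have hq0 : (0:ℝ) < q := by linarith
  have hq2 : (0:ℝ) < q - 2 := by linarith
  have hη : MemLp (fun x => ξ x - 1) (ENNReal.ofReal q) μ := hLq.sub (memLp_const 1)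
  have hη2 : MemLp (fun x => ξ x - 1) 2 μ := by
    apply hη.mono_exponent
    rw [show (2:ENNReal) = ENNReal.ofReal 2 by norm_num]
    exact ENNReal.ofReal_le_ofReal hq.le
  have hYint : Integrable (fun x => (ξ x - 1)^2) μ := hη2.integrable_sq
  have hQint : Integrable (fun x => |ξ x - 1| ^ q) μ := by
    have h1 : (ENNReal.ofReal q) ≠ 0 := by
      simp [ENNReal.ofReal_eq_zero]; linarith
    have := hη.integrable_norm_rpow h1 ENNReal.ofReal_ne_top
    simpa [ENNReal.toReal_ofReal hq0.le, Real.norm_eq_abs] using this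
  set t := ∫ x, (ξ x - 1)^2 ∂μ with ht
  have ht0 : 0 ≤ t := integral_nonneg (fun x => sq_nonneg _)
  set m := ∫ x, |ξ x - 1| ^ q ∂μ with hm
  have hm0 : 0 ≤ m := integral_nonneg (fun x => Real.rpow_nonneg (abs_nonneg _) q)
  by_cases hm00 : m = 0
  · -- degenerate case : ξ = 1 a.e.
    have hm00' : ∫ x, |ξ x - 1| ^ q ∂μ = 0 := by rw [← hm]; exact hm00
    have hae : ∀ᵐ x ∂μ, |ξ x - 1| ^ q = 0 := by
      exact (integral_eq_zero_iff_of_nonneg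
        (fun x => Real.rpow_nonneg (abs_nonneg _) q) hQint).mp hm00'
    have hae1 : ∀ᵐ x ∂μ, ξ x = 1 := by
      filter_upwards [hae] with x hx
      by_contra hne
      have habs : 0 < |ξ x - 1| := abs_pos.2 (sub_ne_zero.2 hne)
      exact absurd hx (ne_of_gt (Real.rpow_pos_of_pos habs q))
    have hL0 : ∫ x, Phi1 ((ξ x)^2) ∂μ = 0 := by
      rw [show (0:ℝ) = ∫ (_ : α), (0:ℝ) ∂μ by simp]
      apply integral_congr_ae
      filter_upwards [hae1] with x hx
      simp [hx, Phi1]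
    have hT0 : t = 0 := by
      rw [ht, show (0:ℝ) = ∫ (_ : α), (0:ℝ) ∂μ by simp]
      apply integral_congr_ae
      filter_upwards [hae1] with x hx
      simp [hx]
    rw [hL0, hm00, hT0]
    rw [Real.zero_rpow (by positivity)]
    simp [Phi1]
  · -- main case
    have hmpos : 0 < m := lt_of_le_of_ne hm0 (Ne.symm hm00)
    set N := m ^ (2/q) with hN
    have hN0 : 0 < N := Real.rpow_pos_of_pos hmpos _
    set p := q/2 with hp
    have hp1 : 1 < p := by rw [hp]; linarith
    have hp0 : 0 < p - 1 := by linarith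
    set φ : α → ℝ := fun x => 1 + (ξ x - 1)^2 with hφ
    have hφ1 : ∀ x, 1 ≤ φ x := fun x => by
      simp only [hφ]; nlinarith [sq_nonneg (ξ x - 1)]
    have hφint : Integrable φ μ := (integrable_const 1).add hYint
    have hintφ : ∫ x, φ x ∂μ = 1 + t := by
      rw [hφ]
      rw [integral_add (integrable_const 1) hYint]
      simp [ht]
    -- measurability
    have hφm : AEStronglyMeasurable φ μ := hφint.aestronglyMeasurable
    have hφpm : AEStronglyMeasurable (fun x => φ x ^ p) μ := by
      exact (Real.continuous_rpow_const (by positivity : (0:ℝ) ≤ p)).comp_aestronglyMeasurable hφm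
    have hφlogm : AEStronglyMeasurable (fun x => φ x * Real.log (φ x)) μ := by
      exact (hφm.aemeasurable.mul
        (Real.measurable_log.comp_aemeasurable hφm.aemeasurable)).aestronglyMeasurable
    -- integrability of φ^p
    have hconv1 : ∀ x, φ x ^ p ≤ 2^(p-1) + |ξ x - 1|^q * (2^(p-1) * (1:ℝ)^(1-p)) := by
      intro x
      have := conv_pt (y := (ξ x - 1)^2) (sq_nonneg _) one_pos hp1.le
      rw [sq_rpow_half (ξ x - 1) q] at this
      norm_num at this ⊢
      convert this using 3 <;> norm_num
    have hφp_int : Integrable (fun x => φ x ^ p) μ := by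
      apply Integrable.mono' ((integrable_const ((2:ℝ)^(p-1))).add
        (hQint.mul_const (2^(p-1) * (1:ℝ)^(1-p)))) hφpm
      filter_upwards with x
      rw [Real.norm_eq_abs, abs_of_nonneg (Real.rpow_nonneg (by linarith [hφ1 x]) p)]
      exact hconv1 x
    -- integrability of φ log φ
    have htan1 : ∀ x, φ x * Real.log (φ x) ≤ (φ x ^ p - φ x)/(p-1) := by
      intro x
      have := tangent_bound (hφ1 x) one_pos hp1
      rw [Real.log_one] at this
      simp only [div_one, mul_zero, add_zero] at this
      rw [le_div_iff₀ hp0]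
      linarith
    have hφlog_nonneg : ∀ x, 0 ≤ φ x * Real.log (φ x) := fun x =>
      mul_nonneg (by linarith [hφ1 x]) (Real.log_nonneg (hφ1 x))
    have hφlog_int : Integrable (fun x => φ x * Real.log (φ x)) μ := by
      apply Integrable.mono' ((hφp_int.sub hφint).div_const (p-1)) hφlogm
      filter_upwards with x
      rw [Real.norm_eq_abs, abs_of_nonneg (hφlog_nonneg x)]
      exact htan1 x
    -- Step 1
    have step1 : ∫ x, Phi1 ((ξ x)^2) ∂μ
        ≤ 2*t + ∫ x, φ x * Real.log (φ x) ∂μ := by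
      have h1 : ∫ x, Phi1 ((ξ x)^2) ∂μ
          ≤ ∫ x, (2*(ξ x - 1)^2 + φ x * Real.log (φ x)) ∂μ := by
        apply integral_mono hΦint ((hYint.const_mul 2).add hφlog_int)
        intro x
        have hP := pointwise_P (ξ x)
        have e : 3*(ξ x - 1)^2 + Phi1 (1 + (ξ x - 1)^2)
            = 2*(ξ x - 1)^2 + φ x * Real.log (φ x) := by
          simp only [Phi1, hφ]; ring
        simp only [Pi.add_apply]
        linarith [hP, e.le, e.ge]
      rw [integral_add (hYint.const_mul 2) hφlog_int, integral_const_mul] at h1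
      exact h1
    -- Step 2 : ∫ φ^p ≤ (1+N)^p
    have hmN : m = N ^ p := by
      rw [hN, hp, ← Real.rpow_mul hm0]
      rw [show 2/q * (q/2) = 1 by field_simp]
      exact (Real.rpow_one m).symm
    have step2 : ∫ x, φ x ^ p ∂μ ≤ (1+N)^p := by
      have hpt : ∀ x, φ x ^ p ≤ (1+N)^(p-1) + |ξ x - 1|^q * ((1+N)^(p-1) * N^(1-p)) := by
        intro x
        have := conv_pt (y := (ξ x - 1)^2) (sq_nonneg _) hN0 hp1.le
        rwa [sq_rpow_half (ξ x - 1) q] at this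
      have h2 : ∫ x, φ x ^ p ∂μ
          ≤ ∫ x, ((1+N)^(p-1) + |ξ x - 1|^q * ((1+N)^(p-1) * N^(1-p))) ∂μ :=
        integral_mono hφp_int ((integrable_const _).add
          (hQint.mul_const _)) hpt
      rw [integral_add (integrable_const _) (hQint.mul_const _),
        integral_const, integral_mul_const] at h2
      simp only [measure_univ, probReal_univ, ENNReal.toReal_one, smul_eq_mul, one_mul] at h2
      rw [← hm] at h2
      have e : (1+N)^(p-1) + m * ((1+N)^(p-1) * N^(1-p)) = (1+N)^p := by
        rw [hmN]
        have e1 : N^p * ((1+N)^(p-1) * N^(1-p)) = (1+N)^(p-1) * N := by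
          rw [show N^p * ((1+N)^(p-1) * N^(1-p)) = (1+N)^(p-1) * (N^p * N^(1-p)) by ring,
            ← Real.rpow_add hN0]
          norm_num
        rw [e1, show (1+N)^(p-1) + (1+N)^(p-1)*N = (1+N)^(p-1) * (1+N) by ring]
        nth_rewrite 2 [← Real.rpow_one (1+N)]
        rw [← Real.rpow_add (by linarith)]
        norm_num
      rw [e] at h2
      exact h2
    -- Step 3 : tangent bound with c = (1+N)^(p-1)
    set c := (1+N)^(p-1) with hc
    have hc0 : 0 < c := Real.rpow_pos_of_pos (by linarith) _
    have hlogc : Real.log c = (p-1) * Real.log (1+N) := Real.log_rpow (by linarith) _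
    have step3 : (p-1) * ∫ x, φ x * Real.log (φ x) ∂μ
        ≤ (∫ x, φ x ^ p ∂μ)/c - (1+t) + (1+t) * Real.log c := by
      have hpt : ∀ x, (p-1)*(φ x * Real.log (φ x))
          ≤ φ x ^ p / c - φ x + φ x * Real.log c := fun x =>
        tangent_bound (hφ1 x) hc0 hp1
      have i1 : Integrable (fun x => φ x ^ p / c - φ x) μ := (hφp_int.div_const c).sub hφint
      have i2 : Integrable (fun x => φ x * Real.log c) μ := hφint.mul_const _
      have h3 : ∫ x, (p-1)*(φ x * Real.log (φ x)) ∂μ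
          ≤ ∫ x, (φ x ^ p / c - φ x + φ x * Real.log c) ∂μ := by
        apply integral_mono (hφlog_int.const_mul _) (i1.add i2) hpt
      rw [integral_const_mul] at h3
      rw [integral_add i1 i2, integral_sub (hφp_int.div_const c) hφint, integral_div,
        integral_mul_const, hintφ] at h3
      exact h3
    -- combine
    have hdivc : (∫ x, φ x ^ p ∂μ)/c ≤ 1 + N := by
      rw [div_le_iff₀ hc0]
      calc ∫ x, φ x ^ p ∂μ ≤ (1+N)^p := step2
        _ = (1+N) * c := by
          rw [hc]
          nth_rewrite 1 [show p = 1 + (p-1) by ring]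
          rw [Real.rpow_add (by linarith)]
          norm_num
    have hlogN : Real.log (1+N) ≤ Real.log (1+t) + (N-t)/(1+t) := by
      have h1 := Real.log_le_sub_one_of_pos (show (0:ℝ) < (1+N)/(1+t) by positivity)
      rw [Real.log_div (by linarith) (by linarith)] at h1
      have e : (1+N)/(1+t) - 1 = (N-t)/(1+t) := by field_simp; ring
      linarith [e.le, e.ge]
    set I := ∫ x, φ x * Real.log (φ x) ∂μ with hI
    set L := Real.log (1+t) with hL
    have hIb : (p-1) * I ≤ (N - t) + (1+t)*(p-1)*L + (p-1)*(N-t) := by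
      have h4 : (1+t) * Real.log c = (1+t)*(p-1)*Real.log (1+N) := by
        rw [hlogc]; ring
      have h5 : (1+t)*(p-1)*Real.log (1+N) ≤ (1+t)*(p-1)*L + (p-1)*(N-t) := by
        have h6 : (1+t)*(p-1)*Real.log (1+N) ≤ (1+t)*(p-1)*(L + (N-t)/(1+t)) :=
          mul_le_mul_of_nonneg_left hlogN (by positivity)
        have e : (1+t)*(p-1)*(L + (N-t)/(1+t)) = (1+t)*(p-1)*L + (p-1)*(N-t) := by
          field_simp
        linarith [e.le, e.ge]
      calc (p-1)*I ≤ (∫ x, φ x ^ p ∂μ)/c - (1+t) + (1+t)*Real.log c := step3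
        _ ≤ (1+N) - (1+t) + (1+t)*(p-1)*Real.log (1+N) := by
            rw [← h4]; linarith [hdivc]
        _ ≤ (N-t) + (1+t)*(p-1)*L + (p-1)*(N-t) := by linarith [h5]
    have hIb2 : I ≤ (N-t)*(2/(q-2)) + (1+t)*L + (N-t) := by
      have hhalf : (0:ℝ) < (q-2)/2 := by linarith
      rw [← mul_le_mul_iff_right₀ hhalf]
      have e1 : (q-2)/2 = p - 1 := by rw [hp]; ring
      have e2 : (q-2)/2 * ((N-t)*(2/(q-2)) + (1+t)*L + (N-t))
          = (N-t) + (1+t)*((q-2)/2)*L + ((q-2)/2)*(N-t) := by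
        field_simp
      rw [e2, e1]
      exact hIb
    -- final assembly
    have hPhi : Phi1 (1 + t) = (1+t)*L - t := by
      simp only [Phi1, hL]; ring
    have hfin : 2*t + ((N-t)*(2/(q-2)) + (1+t)*L + (N-t))
        = q/(q-2)*N + (2*q-6)/(q-2)*t + ((1+t)*L - t) := by
      field_simp
      ring
    calc ∫ x, Phi1 ((ξ x)^2) ∂μ ≤ 2*t + I := step1
      _ ≤ 2*t + ((N-t)*(2/(q-2)) + (1+t)*L + (N-t)) := by linarith [hIb2]
      _ = q/(q-2)*N + (2*q-6)/(q-2)*t + Phi1 (1+t) := by rw [hfin, hPhi]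
end
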